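/- arXiv:1210.0377 — 3 statements merged into one kernel-verified Lean document; each statement's English description precedes it below -/
import Mathlib

section
/- The number of semi-standard Young tableaux of stretched shape kμ/kν with entries in {1,...,n} is a polynomial function of the positive integer k. -/
open scoped BigOperators

/-- A partition: a weakly decreasing sequence of naturals that is eventually zero. -/
def IsPartition (f : ℕ → ℕ) : Prop :=
  (∀ i j, i ≤ j → f j ≤ f i) ∧ ∃ N, ∀ i, N ≤ i → f i = 0

/-- Data of a (skew) filling with entries bounded by `n`: the inner shape `inner`, and for
each row the weakly increasing list of its entries.  The outer shape of the filling is
`inner i + (row i).length`, so skew boxes sit to the left of all entries of a row. -/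
structure SkewTab (n : ℕ) where
  inner : ℕ → ℕ
  row : ℕ → List ℕ

namespace SkewTab

variable {n : ℕ}

/-- The outer shape. -/
def outer (T : SkewTab n) : ℕ → ℕ := fun i => T.inner i + (T.row i).length

/-- The entry in row `i`, column `j` (0-indexed); meaningful for `inner i ≤ j < outer i`. -/
def entry (T : SkewTab n) (i j : ℕ) : ℕ := (T.row i).getD (j - T.inner i) 0

/-- `T` is a semistandard Young tableau of skew shape `outer/inner` with entries in
`{1,…,n}`: both shapes are partitions, rows are weakly increasing and columns are
strictly increasing. -/
def IsSSYT (T : SkewTab n) : Prop :=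
  IsPartition T.inner ∧ IsPartition T.outer ∧
  (∀ i, (T.row i).Pairwise (· ≤ ·)) ∧
  (∀ i, ∀ x ∈ T.row i, 1 ≤ x ∧ x ≤ n) ∧
  (∀ i j, T.inner i ≤ j → j < T.outer i → T.inner (i+1) ≤ j → j < T.outer (i+1) →
    T.entry i j < T.entry (i+1) j)

/-- Tableau insertion `T1 ⊠ T2`: concatenate corresponding rows and sort each row
weakly increasingly; the skew boxes (inner shapes) add up and are pushed to the left,
i.e. treated as smaller than all numbered entries. -/
def ins (T1 T2 : SkewTab n) : SkewTab n where
  inner := fun i => T1.inner i + T2.inner i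
  row := fun i => (T1.row i ++ T2.row i).mergeSort (fun a b => decide (a ≤ b))

/-- The empty tableau. -/
def empty : SkewTab n := ⟨fun _ => 0, fun _ => []⟩

/-- The weight of `T`: `wt T k` is the number of boxes with entry `k`. -/
noncomputable def wt (T : SkewTab n) (k : ℕ) : ℕ := ∑ᶠ i, (T.row i).count k

/-- The `c`-th column of `T` (0-indexed), viewed as a single-column skew tableau
(keeping its skew boxes). -/
def col (T : SkewTab n) (c : ℕ) : SkewTab n where
  inner := fun i => if c < T.inner i then 1 else 0
  row := fun i =>
    if T.inner i ≤ c ∧ c < T.outer i then [(T.row i).getD (c - T.inner i) 0] else []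

end SkewTab

/-- The set of SSYTs of shape `mu/nu` with entries in `{1,…,n}`. -/
def Tabs (n : ℕ) (mu nu : ℕ → ℕ) : Set (SkewTab n) :=
  {T | T.IsSSYT ∧ T.inner = nu ∧ T.outer = mu}

/-- The monomial `x^w = x₁^{w₁} ⋯ xₙ^{wₙ}`. -/
noncomputable def xpow (n : ℕ) (w : Fin n → ℕ) : MvPolynomial (Fin n) ℤ :=
  ∏ k : Fin n, MvPolynomial.X k ^ w k

/-- The monomial `x^{w(T)}` attached to a tableau `T` (variable `x_k` corresponds to
the entry `k ∈ {1,…,n}`). -/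
noncomputable def xwt {n : ℕ} (T : SkewTab n) : MvPolynomial (Fin n) ℤ :=
  xpow n (fun k => T.wt ((k : ℕ) + 1))

/-- The skew Schur polynomial `s_{mu/nu}(x₁,…,xₙ) = Σ_T x^{w(T)}`. -/
noncomputable def schur (n : ℕ) (mu nu : ℕ → ℕ) : MvPolynomial (Fin n) ℤ :=
  ∑ᶠ T ∈ Tabs n mu nu, xwt T

/-- The Kostka number `K_{lam/mu,w}`: the number of SSYTs of shape `lam/mu` with
entries in `{1,…,n}` and weight `w`. -/
noncomputable def kostka (n : ℕ) (lam mu : ℕ → ℕ) (w : Fin n → ℕ) : ℕ :=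
  Nat.card {T : SkewTab n // T ∈ Tabs n lam mu ∧ ∀ k : Fin n, T.wt ((k : ℕ) + 1) = w k}

/-- The monomial symmetric polynomial `m_w`: the sum of `x^u` over the distinct
rearrangements `u` of `w`. -/
noncomputable def mSym (n : ℕ) (w : Fin n → ℕ) : MvPolynomial (Fin n) ℤ :=
  ∑ᶠ u ∈ {u : Fin n → ℕ | ∃ σ : Equiv.Perm (Fin n), u = w ∘ σ}, xpow n u

/-- The characteristic polynomial `χ(t) = ∏_{T ∈ T^n_{mu/nu}} (t − x^{w(T)})`. -/
noncomputable def charPoly (n : ℕ) (mu nu : ℕ → ℕ) : Polynomial (MvPolynomial (Fin n) ℤ) :=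
  ∏ᶠ T ∈ Tabs n mu nu, (Polynomial.X - Polynomial.C (xwt T))

/-- `mu/nu` sits inside `alpha/beta`: there is an injection `f` of column positions such
that for every row, column `j` of `mu/nu` has a cell (resp. a skew box) exactly when
column `f j` of `alpha/beta` does; i.e. every column of the diagram of `mu/nu` can be
found among the columns of the diagram of `alpha/beta`, counting multiplicities. -/
def SitsInside (mu nu alpha beta : ℕ → ℕ) : Prop :=
  ∃ f : ℕ → ℕ, Function.Injective f ∧
    ∀ j i, ((nu i ≤ j ∧ j < mu i) ↔ (beta i ≤ f j ∧ f j < alpha i)) ∧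
      (j < nu i ↔ f j < beta i)


-- ===== auxiliary development =====
set_option linter.unusedSectionVars false
set_option maxHeartbeats 1000000

def SMset (m : ℕ) (A B : ℤ) : Set (Fin m → ℤ) :=
  {g | StrictMono g ∧ ∀ i, g i ∈ Set.Ioo A B}


lemma card_SMset (m : ℕ) (A B : ℤ) :
    Nat.card (SMset m A B) = ((B - A - 1).toNat).choose m := by
  classical
  have e : SMset m A B ≃ (Finset.Ioo A B).powersetCard m := by
    refine
      { toFun := fun g => ⟨Finset.image g.1 Finset.univ, ?_⟩
        invFun := fun s => ⟨(s.1.orderEmbOfFin ?_ : Fin m → ℤ), ?_, ?_⟩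
        left_inv := ?_
        right_inv := ?_ }
    · rw [Finset.mem_powersetCard]
      constructor
      · intro x hx
        simp only [Finset.mem_image] at hx
        obtain ⟨i, _, rfl⟩ := hx
        have := g.2.2 i
        simpa [Finset.mem_Ioo] using this
      · rw [Finset.card_image_of_injective _ g.2.1.injective, Finset.card_univ,
          Fintype.card_fin]
    · exact (Finset.mem_powersetCard.mp s.2).2
    · exact (s.1.orderEmbOfFin _).strictMono
    · intro i
      have : s.1.orderEmbOfFin (Finset.mem_powersetCard.mp s.2).2 i ∈ s.1 :=
        Finset.orderEmbOfFin_mem _ _ _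
      have := (Finset.mem_powersetCard.mp s.2).1 this
      simpa [Finset.mem_Ioo] using this
    · intro g
      ext i : 2
      have hmem : ∀ x, g.1 x ∈ Finset.image g.1 Finset.univ := fun x =>
        Finset.mem_image_of_mem _ (Finset.mem_univ x)
      have := Finset.orderEmbOfFin_unique
        (s := Finset.image g.1 Finset.univ)
        (by rw [Finset.card_image_of_injective _ g.2.1.injective, Finset.card_univ,
          Fintype.card_fin]) hmem g.2.1
      exact (congrFun this i).symm
    · intro s
      apply Subtype.ext
      rw [← Finset.coe_inj, Finset.coe_image, Finset.coe_univ, Set.image_univ,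
        Finset.range_orderEmbOfFin]
  rw [Nat.card_congr e, Nat.card_eq_finsetCard, Finset.card_powersetCard, Int.card_Ioo]

/-- `chPoly m d` is the polynomial whose value at `k ≥ 1` is `(k*d - 1).choose m`. -/
noncomputable def chPoly (m d : ℕ) : Polynomial ℚ :=
  Polynomial.C (1 / (m.factorial : ℚ)) *
    (descPochhammer ℚ m).comp (Polynomial.C (d : ℚ) * Polynomial.X - 1)

lemma chPoly_eval (m d k : ℕ) (hk : 0 < k) (hd : 0 < d) :
    (chPoly m d).eval (k : ℚ) = ((k * d - 1).choose m : ℚ) := by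
  have h1 : (1 : ℕ) ≤ k * d := Nat.one_le_iff_ne_zero.mpr (Nat.mul_ne_zero hk.ne' hd.ne')
  have harg : ((d : ℚ) * k - 1) = ((k * d - 1 : ℕ) : ℚ) := by
    push_cast [Nat.cast_sub h1]
    ring
  rw [chPoly, Polynomial.eval_mul, Polynomial.eval_C, Polynomial.eval_comp]
  simp only [Polynomial.eval_sub, Polynomial.eval_mul, Polynomial.eval_C, Polynomial.eval_X,
    Polynomial.eval_one]
  rw [harg, descPochhammer_eval_eq_descFactorial]
  rw [Nat.choose_eq_descFactorial_div_factorial,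
    Nat.cast_div (Nat.factorial_dvd_descFactorial _ _)
      (by exact_mod_cast m.factorial_ne_zero)]
  ring

namespace Stretch

variable {V : Type} [Fintype V] [DecidableEq V] {r : ℕ}

def ival (cval : Fin r → ℕ) (k : ℕ) (x : V → ℤ) : V ⊕ Fin r → ℤ :=
  fun e => Sum.rec (fun v => x v) (fun t => (k : ℤ) * cval t) e

def holds (cval : Fin r → ℕ) (k : ℕ) (x : V → ℤ)
    (c : (V ⊕ Fin r) × (V ⊕ Fin r) × Bool) : Prop :=
  if c.2.2 then ival cval k x c.1 < ival cval k x c.2.1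
  else ival cval k x c.1 ≤ ival cval k x c.2.1

def SolSet (cval : Fin r → ℕ) (C : Finset ((V ⊕ Fin r) × (V ⊕ Fin r) × Bool)) (k : ℕ) :
    Set (V → ℤ) :=
  {x | ∀ c ∈ C, holds cval k x c}

section Rnk
variable (cval : Fin r → ℕ) (k : ℕ) (x : V → ℤ)

/-- The set of values taken by items. -/
def vals : Finset ℤ := Finset.image (ival cval k x) Finset.univ

lemma ival_mem_vals (e : V ⊕ Fin r) : ival cval k x e ∈ vals cval k x :=
  Finset.mem_image_of_mem _ (Finset.mem_univ e)

/-- Total number of item slots. -/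
def M (V : Type) [Fintype V] (r : ℕ) : ℕ := Fintype.card V + r

lemma vals_card_le : (vals cval k x).card ≤ M V r := by
  calc (vals cval k x).card ≤ Finset.univ.card := Finset.card_image_le
  _ = Fintype.card (V ⊕ Fin r) := Finset.card_univ
  _ = M V r := by simp [M]

/-- The rank of an item: its position among the distinct values. -/
noncomputable def rnk (e : V ⊕ Fin r) : Fin (M V r) :=
  Fin.castLE (vals_card_le cval k x)
    (((vals cval k x).orderIsoOfFin rfl).symm ⟨ival cval k x e, ival_mem_vals cval k x e⟩)

/-- The value at a given rank position (junk `0` out of range). -/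
noncomputable def pv (j : ℕ) : ℤ :=
  if h : j < (vals cval k x).card then (((vals cval k x).orderIsoOfFin rfl) ⟨j, h⟩ : ℤ) else 0

lemma rnk_lt (e : V ⊕ Fin r) : (rnk cval k x e : ℕ) < (vals cval k x).card := by
  simp only [rnk, Fin.coe_castLE]
  exact Fin.isLt _

lemma pv_rnk (e : V ⊕ Fin r) : pv cval k x (rnk cval k x e) = ival cval k x e := by
  rw [pv, dif_pos (rnk_lt cval k x e)]
  have : (⟨(rnk cval k x e : ℕ), rnk_lt cval k x e⟩ : Fin (vals cval k x).card) =
      ((vals cval k x).orderIsoOfFin rfl).symm ⟨ival cval k x e, ival_mem_vals cval k x e⟩ := by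
    simp [rnk]
  rw [this, OrderIso.apply_symm_apply]

lemma pv_strictMono {j j' : ℕ} (h : j < j') (h' : j' < (vals cval k x).card) :
    pv cval k x j < pv cval k x j' := by
  rw [pv, pv, dif_pos (h.trans h'), dif_pos h']
  exact Subtype.coe_lt_coe.mpr (((vals cval k x).orderIsoOfFin rfl).strictMono
    (show (⟨j, h.trans h'⟩ : Fin _) < ⟨j', h'⟩ from h))

lemma rnk_surj {j : ℕ} (h : j < (vals cval k x).card) : ∃ e, (rnk cval k x e : ℕ) = j := by
  obtain ⟨e, -, hv⟩ := Finset.mem_image.mp ((((vals cval k x).orderIsoOfFin rfl) ⟨j, h⟩).2)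
  refine ⟨e, ?_⟩
  have : (⟨ival cval k x e, ival_mem_vals cval k x e⟩ : ↥(vals cval k x)) =
      ((vals cval k x).orderIsoOfFin rfl) ⟨j, h⟩ := Subtype.ext hv
  simp [rnk, this]

lemma rnk_le_iff (a b : V ⊕ Fin r) :
    rnk cval k x a ≤ rnk cval k x b ↔ ival cval k x a ≤ ival cval k x b := by
  have h1 : rnk cval k x a ≤ rnk cval k x b ↔
      ((vals cval k x).orderIsoOfFin rfl).symm ⟨ival cval k x a, ival_mem_vals cval k x a⟩ ≤
      ((vals cval k x).orderIsoOfFin rfl).symm ⟨ival cval k x b, ival_mem_vals cval k x b⟩ :=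
    Iff.rfl
  rw [h1, OrderIso.le_iff_le, Subtype.mk_le_mk]

lemma rnk_lt_iff (a b : V ⊕ Fin r) :
    rnk cval k x a < rnk cval k x b ↔ ival cval k x a < ival cval k x b := by
  have h1 : rnk cval k x a < rnk cval k x b ↔
      ((vals cval k x).orderIsoOfFin rfl).symm ⟨ival cval k x a, ival_mem_vals cval k x a⟩ <
      ((vals cval k x).orderIsoOfFin rfl).symm ⟨ival cval k x b, ival_mem_vals cval k x b⟩ :=
    Iff.rfl
  rw [h1, OrderIso.lt_iff_lt, Subtype.mk_lt_mk]


end Rnk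

variable {r' : ℕ}

/-- `Good C f`: the combinatorial conditions a rank pattern must satisfy to be realizable. -/
def Good (C : Finset ((V ⊕ Fin (r'+1)) × (V ⊕ Fin (r'+1)) × Bool))
    (f : (V ⊕ Fin (r'+1)) → Fin (M V (r'+1))) : Prop :=
  (∀ c ∈ C, if c.2.2 then f c.1 < f c.2.1 else f c.1 ≤ f c.2.1) ∧
  (StrictMono fun t => f (Sum.inr t)) ∧
  ((f (Sum.inr 0) : ℕ) = 0) ∧
  (∀ e, f e ≤ f (Sum.inr (Fin.last r'))) ∧
  (∀ j : Fin (M V (r'+1)), j ≤ f (Sum.inr (Fin.last r')) → ∃ e, f e = j)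

variable (cval : Fin (r'+1) → ℕ) (C : Finset ((V ⊕ Fin (r'+1)) × (V ⊕ Fin (r'+1)) × Bool))
  (k : ℕ) (f : (V ⊕ Fin (r'+1)) → Fin (M V (r'+1)))

/-- The set of solutions with rank pattern `f`. -/
noncomputable def Xf : Set (V → ℤ) :=
  {x | x ∈ SolSet cval C k ∧ rnk cval k x = f}

def Jpos : Fin (r'+1) → ℕ := fun t => (f (Sum.inr t) : ℕ)

def gap : Fin r' → ℕ := fun t => Jpos f t.succ - Jpos f t.castSucc - 1

def dd : Fin r' → ℕ := fun t => cval t.succ - cval t.castSucc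

lemma kcval_lt (hc : StrictMono cval) (hk : 0 < k) {a b : Fin (r'+1)} (h : a < b) :
    (k : ℤ) * cval a < (k : ℤ) * cval b := by
  have := hc h
  have : (cval a : ℤ) < cval b := by exact_mod_cast this
  have hk' : (0 : ℤ) < k := by exact_mod_cast hk
  exact mul_lt_mul_of_pos_left this hk'

lemma kcval_le (hc : StrictMono cval) {a b : Fin (r'+1)} (h : a ≤ b) :
    (k : ℤ) * cval a ≤ (k : ℤ) * cval b := by
  have := hc.monotone h
  have : (cval a : ℤ) ≤ cval b := by exact_mod_cast this
  have hk' : (0 : ℤ) ≤ k := by positivity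
  exact mul_le_mul_of_nonneg_left this hk'

lemma good_of_mem (hc : StrictMono cval) (hk : 0 < k)
    (hsand : ∀ v : V, ∃ a b : Fin (r'+1),
      (Sum.inr a, Sum.inl v, false) ∈ C ∧ (Sum.inl v, Sum.inr b, false) ∈ C)
    {x : V → ℤ} (hx : x ∈ Xf cval C k f) : Good C f := by
  obtain ⟨hsol, hr⟩ := hx
  subst hr
  have hle : ∀ v : V, (k : ℤ) * cval 0 ≤ x v ∧ x v ≤ (k : ℤ) * cval (Fin.last r') := by
    intro v
    obtain ⟨a, b, ha, hb⟩ := hsand v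
    have h1 := hsol _ ha
    have h2 := hsol _ hb
    simp only [holds, if_neg Bool.false_ne_true, ival] at h1 h2
    constructor
    · exact le_trans (kcval_le cval k hc (Fin.zero_le a)) h1
    · exact le_trans h2 (kcval_le cval k hc (Fin.le_last b))
  have hival_le : ∀ e, ival cval k x (Sum.inr 0) ≤ ival cval k x e := by
    intro e
    cases e with
    | inl v => exact (hle v).1
    | inr t => exact kcval_le cval k hc (Fin.zero_le t)
  have hival_ge : ∀ e, ival cval k x e ≤ ival cval k x (Sum.inr (Fin.last r')) := by
    intro e
    cases e with
    | inl v => exact (hle v).2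
    | inr t => exact kcval_le cval k hc (Fin.le_last t)
  refine ⟨?_, ?_, ?_, ?_, ?_⟩
  · intro c hcC
    have := hsol c hcC
    by_cases hb : c.2.2
    · simp only [holds, if_pos hb] at this
      simpa [if_pos hb] using (rnk_lt_iff cval k x c.1 c.2.1).mpr this
    · simp only [holds, if_neg hb] at this
      simpa [if_neg hb] using (rnk_le_iff cval k x c.1 c.2.1).mpr this
  · intro a b hab
    exact (rnk_lt_iff cval k x _ _).mpr (kcval_lt cval k hc hk hab)
  · -- rank of the bottom pin is 0
    have hL : 0 < (vals cval k x).card := by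
      rw [Finset.card_pos]
      exact ⟨_, ival_mem_vals cval k x (Sum.inr 0)⟩
    obtain ⟨e, he⟩ := rnk_surj cval k x hL
    have h1 : rnk cval k x (Sum.inr 0) ≤ rnk cval k x e :=
      (rnk_le_iff cval k x _ _).mpr (hival_le e)
    have h2 : (rnk cval k x (Sum.inr 0) : ℕ) ≤ 0 := by
      calc (rnk cval k x (Sum.inr 0) : ℕ) ≤ (rnk cval k x e : ℕ) := h1
      _ = 0 := he
    omega
  · intro e
    exact (rnk_le_iff cval k x _ _).mpr (hival_ge e)
  · intro j hj
    have hlast : ((rnk cval k x (Sum.inr (Fin.last r'))) : ℕ) = (vals cval k x).card - 1 := by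
      -- the top pin has the top rank
      have h1 : ∀ e, (rnk cval k x e : ℕ) ≤ (rnk cval k x (Sum.inr (Fin.last r')) : ℕ) :=
        fun e => (rnk_le_iff cval k x _ _).mpr (hival_ge e)
      have h2 := rnk_lt cval k x (Sum.inr (Fin.last r'))
      obtain ⟨e, he⟩ := rnk_surj cval k x
        (show (vals cval k x).card - 1 < (vals cval k x).card by
          have : 0 < (vals cval k x).card := by
            rw [Finset.card_pos]; exact ⟨_, ival_mem_vals cval k x (Sum.inr 0)⟩
          omega)
      have := h1 e
      omega
    have hjlt : (j : ℕ) < (vals cval k x).card := by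
      have := hj
      rw [Fin.le_def] at this
      have h2 := rnk_lt cval k x (Sum.inr (Fin.last r'))
      omega
    obtain ⟨e, he⟩ := rnk_surj cval k x hjlt
    exact ⟨e, by rw [Fin.ext_iff]; simp only [he]⟩

section GoodCase

variable {cval : Fin (r'+1) → ℕ} {C : Finset ((V ⊕ Fin (r'+1)) × (V ⊕ Fin (r'+1)) × Bool)}
  {k : ℕ} {f : (V ⊕ Fin (r'+1)) → Fin (M V (r'+1))}

lemma J_lt_of_lt (hg : Good C f) {a b : Fin (r'+1)} (h : a < b) : Jpos f a < Jpos f b :=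
  hg.2.1 h

lemma J_le_of_le (hg : Good C f) {a b : Fin (r'+1)} (h : a ≤ b) : Jpos f a ≤ Jpos f b := by
  rcases eq_or_lt_of_le h with h' | h'
  · rw [h']
  · exact le_of_lt (J_lt_of_lt hg h')

lemma J_inj (hg : Good C f) : Function.Injective (Jpos f) := by
  intro a b hab
  rcases lt_trichotomy a b with h | h | h
  · exact absurd hab (J_lt_of_lt hg h).ne
  · exact h
  · exact absurd hab.symm (J_lt_of_lt hg h).ne

lemma J_zero (hg : Good C f) : Jpos f 0 = 0 := hg.2.2.1

lemma classify (hg : Good C f) {p : ℕ} (hp : p ≤ Jpos f (Fin.last r')) :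
    (∃ t, Jpos f t = p) ∨ ∃ t : Fin r', Jpos f t.castSucc < p ∧ p < Jpos f t.succ := by
  classical
  by_cases h0 : ∃ t, Jpos f t = p
  · exact Or.inl h0
  push_neg at h0
  set S := Finset.univ.filter (fun t : Fin (r'+1) => Jpos f t ≤ p) with hS
  have hne : S.Nonempty := ⟨0, by simp [hS, J_zero hg]⟩
  set t0 := S.max' hne with ht0def
  have ht0 : Jpos f t0 ≤ p := by
    have := S.max'_mem hne
    simp only [hS, Finset.mem_filter] at this
    exact this.2
  have ht0lt : Jpos f t0 < p := lt_of_le_of_ne ht0 (h0 t0)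
  have hne_last : t0 ≠ Fin.last r' := by
    intro h
    rw [h] at ht0lt
    omega
  refine Or.inr ⟨t0.castPred hne_last, ?_, ?_⟩
  · rwa [Fin.castSucc_castPred]
  · by_contra hcon
    push_neg at hcon
    have hmem : (t0.castPred hne_last).succ ∈ S := by
      simp only [hS, Finset.mem_filter]
      exact ⟨Finset.mem_univ _, hcon⟩
    have hle := S.le_max' _ hmem
    rw [← ht0def] at hle
    have h2 : t0 < (t0.castPred hne_last).succ := by
      conv_lhs => rw [← Fin.castSucc_castPred t0 hne_last]
      exact Fin.castSucc_lt_succ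
    exact absurd hle (not_le.mpr h2)

lemma gap_unique (hg : Good C f) {p : ℕ} {a b : Fin r'}
    (ha1 : Jpos f a.castSucc < p) (ha2 : p < Jpos f a.succ)
    (hb1 : Jpos f b.castSucc < p) (hb2 : p < Jpos f b.succ) : a = b := by
  by_contra hne
  rcases lt_trichotomy (a : ℕ) (b : ℕ) with h | h | h
  · have hle : a.succ ≤ b.castSucc := by
      rw [Fin.le_def]
      simpa using h
    have := J_le_of_le hg hle
    omega
  · exact hne (Fin.ext h)
  · have hle : b.succ ≤ a.castSucc := by
      rw [Fin.le_def]
      simpa using h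
    have := J_le_of_le hg hle
    omega

lemma pin_notin_gap (hg : Good C f) {t' : Fin (r'+1)} {t : Fin r'}
    (h1 : Jpos f t.castSucc < Jpos f t') (h2 : Jpos f t' < Jpos f t.succ) : False := by
  have ha : t.castSucc < t' := by
    rcases lt_or_ge t.castSucc t' with h | h
    · exact h
    · exact absurd (J_le_of_le hg h) (by omega)
  have hb : t' < t.succ := by
    rcases lt_or_ge t' t.succ with h | h
    · exact h
    · exact absurd (J_le_of_le hg h) (by omega)
  rw [Fin.lt_def] at ha hb
  simp only [Fin.coe_castSucc, Fin.val_succ] at ha hb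
  omega

/-- Glued function on rank positions, built from pin values and gap data `y`. -/
noncomputable def Wfun (cval : Fin (r'+1) → ℕ) (k : ℕ)
    (f : (V ⊕ Fin (r'+1)) → Fin (M V (r'+1)))
    (y : ∀ t : Fin r', SMset (gap f t) ((k:ℤ) * cval t.castSucc) ((k:ℤ) * cval t.succ)) :
    ℕ → ℤ := fun j =>
  if h : ∃ t, Jpos f t = j then (k:ℤ) * cval h.choose
  else if h2 : ∃ t : Fin r', Jpos f t.castSucc < j ∧ j < Jpos f t.succ then
    (y h2.choose).1 ⟨j - Jpos f h2.choose.castSucc - 1, by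
      obtain ⟨h3, h4⟩ := h2.choose_spec
      simp only [gap]
      omega⟩
  else 0

variable {y : ∀ t : Fin r', SMset (gap f t) ((k:ℤ) * cval t.castSucc) ((k:ℤ) * cval t.succ)}

lemma Wfun_pin (hg : Good C f) (t : Fin (r'+1)) :
    Wfun cval k f y (Jpos f t) = (k:ℤ) * cval t := by
  rw [Wfun, dif_pos ⟨t, rfl⟩]
  have h := (⟨t, rfl⟩ : ∃ t', Jpos f t' = Jpos f t).choose_spec
  rw [J_inj hg h]

lemma Wfun_gap (hg : Good C f) {t : Fin r'} {j : ℕ}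
    (h1 : Jpos f t.castSucc < j) (h2 : j < Jpos f t.succ) :
    Wfun cval k f y j = (y t).1 ⟨j - Jpos f t.castSucc - 1, by simp only [gap]; omega⟩ := by
  have hpin : ¬ ∃ t', Jpos f t' = j := by
    rintro ⟨t', rfl⟩
    exact pin_notin_gap hg h1 h2
  rw [Wfun, dif_neg hpin, dif_pos ⟨t, h1, h2⟩]
  have hc := (⟨t, h1, h2⟩ : ∃ t', Jpos f t'.castSucc < j ∧ j < Jpos f t'.succ).choose_spec
  have heq : (⟨t, h1, h2⟩ : ∃ t', Jpos f t'.castSucc < j ∧ j < Jpos f t'.succ).choose = t :=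
    gap_unique hg hc.1 hc.2 h1 h2
  have key : ∀ (a b : Fin r') (h : a = b) (hia : j - Jpos f a.castSucc - 1 < gap f a)
      (hib : j - Jpos f b.castSucc - 1 < gap f b),
      (y a).1 ⟨j - Jpos f a.castSucc - 1, hia⟩ = (y b).1 ⟨j - Jpos f b.castSucc - 1, hib⟩ := by
    intro a b h hia hib
    subst h
    rfl
  exact key _ _ heq _ _

lemma Wfun_lt (hg : Good C f) (hc : StrictMono cval) (hk : 0 < k)
    {p q : ℕ} (hpq : p < q) (hq : q ≤ Jpos f (Fin.last r')) :
    Wfun cval k f y p < Wfun cval k f y q := by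
  have hp : p ≤ Jpos f (Fin.last r') := le_of_lt (lt_of_lt_of_le hpq hq)
  rcases classify hg hp with ⟨t, hJt⟩ | ⟨t, ht1, ht2⟩ <;>
    rcases classify hg hq with ⟨t', hJt'⟩ | ⟨t', ht1', ht2'⟩
  · -- pin, pin
    subst hJt; subst hJt'
    rw [Wfun_pin hg, Wfun_pin hg]
    refine kcval_lt cval k hc hk ?_
    rcases le_or_gt t' t with h | h
    · exact absurd (J_le_of_le hg h) (by omega)
    · exact h
  · -- pin, gap
    subst hJt
    rw [Wfun_pin hg, Wfun_gap hg ht1' ht2']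
    have htle : t ≤ t'.castSucc := by
      by_contra hcon
      push_neg at hcon
      have : t'.succ ≤ t := by
        rw [Fin.le_def]
        rw [Fin.lt_def] at hcon
        simp only [Fin.coe_castSucc, Fin.val_succ] at hcon ⊢
        omega
      have := J_le_of_le hg this
      omega
    calc (k:ℤ) * cval t ≤ (k:ℤ) * cval t'.castSucc := kcval_le cval k hc htle
    _ < _ := ((y t').2.2 _).1
  · -- gap, pin
    subst hJt'
    rw [Wfun_gap hg ht1 ht2, Wfun_pin hg]
    have htle : t.succ ≤ t' := by
      by_contra hcon
      push_neg at hcon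
      have : t' ≤ t.castSucc := by
        rw [Fin.le_def]
        rw [Fin.lt_def] at hcon
        simp only [Fin.coe_castSucc, Fin.val_succ] at hcon ⊢
        omega
      have := J_le_of_le hg this
      omega
    calc ((y t).1 _ : ℤ) < (k:ℤ) * cval t.succ := ((y t).2.2 _).2
    _ ≤ _ := kcval_le cval k hc htle
  · -- gap, gap
    rcases lt_trichotomy (t : ℕ) (t' : ℕ) with h | h | h
    · rw [Wfun_gap hg ht1 ht2, Wfun_gap hg ht1' ht2']
      have htle : t.succ ≤ t'.castSucc := by
        rw [Fin.le_def]
        simpa using h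
      calc ((y t).1 _ : ℤ) < (k:ℤ) * cval t.succ := ((y t).2.2 _).2
      _ ≤ (k:ℤ) * cval t'.castSucc := kcval_le cval k hc htle
      _ < _ := ((y t').2.2 _).1
    · have heq : t = t' := Fin.ext h
      subst heq
      rw [Wfun_gap hg ht1 ht2, Wfun_gap hg ht1' ht2']
      exact (y t).2.1 (show (⟨p - Jpos f t.castSucc - 1, _⟩ : Fin (gap f t)) <
        ⟨q - Jpos f t.castSucc - 1, _⟩ by rw [Fin.lt_def]; simp; omega)
    · exfalso
      have htle : t'.succ ≤ t.castSucc := by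
        rw [Fin.le_def]
        simpa using h
      have := J_le_of_le hg htle
      omega

lemma Wfun_injOn (hg : Good C f) (hc : StrictMono cval) (hk : 0 < k)
    {p q : ℕ} (hp : p ≤ Jpos f (Fin.last r')) (hq : q ≤ Jpos f (Fin.last r'))
    (h : Wfun cval k f y p = Wfun cval k f y q) : p = q := by
  rcases lt_trichotomy p q with h' | h' | h'
  · exact absurd h (Wfun_lt hg hc hk h' hq).ne
  · exact h'
  · exact absurd h.symm (Wfun_lt hg hc hk h' hp).ne

/-- The candidate solution built from gap data. -/
noncomputable def xofy (cval : Fin (r'+1) → ℕ) (k : ℕ)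
    (f : (V ⊕ Fin (r'+1)) → Fin (M V (r'+1)))
    (y : ∀ t : Fin r', SMset (gap f t) ((k:ℤ) * cval t.castSucc) ((k:ℤ) * cval t.succ)) :
    V → ℤ := fun v => Wfun cval k f y (f (Sum.inl v))

lemma ival_xofy (hg : Good C f) (e : V ⊕ Fin (r'+1)) :
    ival cval k (xofy cval k f y) e = Wfun cval k f y (f e) := by
  cases e with
  | inl v => rfl
  | inr t => exact (Wfun_pin hg t).symm

lemma xofy_mem_Sol (hg : Good C f) (hc : StrictMono cval) (hk : 0 < k) :
    xofy cval k f y ∈ SolSet cval C k := by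
  intro c hcC
  have hcomp := hg.1 c hcC
  have hlast : ∀ e, (f e : ℕ) ≤ Jpos f (Fin.last r') := fun e => hg.2.2.2.1 e
  rw [holds]
  by_cases hb : c.2.2
  · rw [if_pos hb]
    rw [if_pos hb] at hcomp
    rw [ival_xofy hg, ival_xofy hg]
    exact Wfun_lt hg hc hk hcomp (hlast _)
  · rw [if_neg hb]
    rw [if_neg hb] at hcomp
    rw [ival_xofy hg, ival_xofy hg]
    rcases eq_or_lt_of_le hcomp with h | h
    · rw [h]
    · exact le_of_lt (Wfun_lt hg hc hk h (hlast _))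

lemma vals_xofy (hg : Good C f) :
    vals cval k (xofy cval k f y) =
      (Finset.range (Jpos f (Fin.last r') + 1)).image (Wfun cval k f y) := by
  ext z
  simp only [vals, Finset.mem_image, Finset.mem_range]
  constructor
  · rintro ⟨e, -, rfl⟩
    exact ⟨(f e : ℕ), by
        have := hg.2.2.2.1 e
        rw [Fin.le_def] at this
        simpa [Jpos] using Nat.lt_succ_of_le this,
      (ival_xofy hg e).symm⟩
  · rintro ⟨j, hj, rfl⟩
    have hjM : j < M V (r'+1) := by
      have := (f (Sum.inr (Fin.last r'))).isLt
      simp only [Jpos] at hj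
      omega
    obtain ⟨e, he⟩ := hg.2.2.2.2 ⟨j, hjM⟩ (by rw [Fin.le_def]; simp only [Jpos] at hj ⊢; omega)
    refine ⟨e, Finset.mem_univ e, ?_⟩
    rw [ival_xofy hg, he]

lemma card_vals_xofy (hg : Good C f) (hc : StrictMono cval) (hk : 0 < k) :
    (vals cval k (xofy cval k f y)).card = Jpos f (Fin.last r') + 1 := by
  rw [vals_xofy hg, Finset.card_image_of_injOn, Finset.card_range]
  intro p hp q hq h
  rw [Finset.coe_range, Set.mem_Iio] at hp hq
  exact Wfun_injOn hg hc hk (by omega) (by omega) h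

lemma pv_xofy (hg : Good C f) (hc : StrictMono cval) (hk : 0 < k)
    {j : ℕ} (hj : j ≤ Jpos f (Fin.last r')) :
    pv cval k (xofy cval k f y) j = Wfun cval k f y j := by
  have hcard := card_vals_xofy (y := y) hg hc hk
  have hL : j < (vals cval k (xofy cval k f y)).card := by omega
  have hgs : StrictMono (fun i : Fin (vals cval k (xofy cval k f y)).card =>
      Wfun cval k f y i.val) := by
    intro a b hab
    refine Wfun_lt hg hc hk hab ?_
    have := b.isLt
    omega
  have hmem0 : ∀ j' : ℕ, j' < Jpos f (Fin.last r') + 1 →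
      Wfun cval k f y j' ∈ vals cval k (xofy cval k f y) := by
    intro j' hj'
    rw [vals_xofy hg]
    exact Finset.mem_image.mpr ⟨j', Finset.mem_range.mpr hj', rfl⟩
  have hmem : ∀ i : Fin (vals cval k (xofy cval k f y)).card,
      Wfun cval k f y i.val ∈ vals cval k (xofy cval k f y) :=
    fun i => hmem0 i.val (by have := i.isLt; omega)
  have huniq := Finset.orderEmbOfFin_unique rfl hmem hgs
  rw [pv, dif_pos hL]
  have h2 : (((vals cval k (xofy cval k f y)).orderIsoOfFin rfl) ⟨j, hL⟩ : ℤ) =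
      (vals cval k (xofy cval k f y)).orderEmbOfFin rfl ⟨j, hL⟩ :=
    Finset.coe_orderIsoOfFin_apply _ rfl _
  rw [h2, ← huniq]

lemma rnk_xofy (hg : Good C f) (hc : StrictMono cval) (hk : 0 < k) :
    rnk cval k (xofy cval k f y) = f := by
  funext e
  have h1 : pv cval k (xofy cval k f y) (rnk cval k (xofy cval k f y) e) =
      Wfun cval k f y (f e) := by
    rw [pv_rnk, ival_xofy hg]
  have h2 : (rnk cval k (xofy cval k f y) e : ℕ) ≤ Jpos f (Fin.last r') := by
    have := rnk_lt cval k (xofy cval k f y) e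
    rw [card_vals_xofy hg hc hk] at this
    omega
  rw [pv_xofy hg hc hk h2] at h1
  have h3 : (f e : ℕ) ≤ Jpos f (Fin.last r') := hg.2.2.2.1 e
  exact Fin.ext (Wfun_injOn hg hc hk h2 h3 h1)


/-- The gap data extracted from a solution. -/
noncomputable def fwd (cval : Fin (r'+1) → ℕ) (k : ℕ)
    (f : (V ⊕ Fin (r'+1)) → Fin (M V (r'+1))) (x : V → ℤ) :
    ∀ t : Fin r', Fin (gap f t) → ℤ :=
  fun t i => pv cval k x (Jpos f t.castSucc + 1 + i)

lemma Jpos_lt_card {x : V → ℤ} (hx : rnk cval k x = f) (t : Fin (r'+1)) :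
    Jpos f t < (vals cval k x).card := by
  have := rnk_lt cval k x (Sum.inr t)
  rw [hx] at this
  exact this

lemma pv_Jpos {x : V → ℤ} (hx : rnk cval k x = f) (t : Fin (r'+1)) :
    pv cval k x (Jpos f t) = (k : ℤ) * cval t := by
  have h := pv_rnk cval k x (Sum.inr t)
  rw [hx] at h
  exact h

lemma fwd_mem (hg : Good C f) {x : V → ℤ} (hx : rnk cval k x = f) (t : Fin r') :
    fwd cval k f x t ∈
      SMset (gap f t) ((k:ℤ) * cval t.castSucc) ((k:ℤ) * cval t.succ) := by
  have hcs : Jpos f t.castSucc < Jpos f t.succ := J_lt_of_lt hg (Fin.castSucc_lt_succ (i := t))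
  have hsucc_card : Jpos f t.succ < (vals cval k x).card := Jpos_lt_card hx t.succ
  have hposlt : ∀ i : Fin (gap f t), Jpos f t.castSucc + 1 + (i : ℕ) < Jpos f t.succ := by
    intro i
    have := i.isLt
    simp only [gap] at this
    omega
  constructor
  · intro a b hab
    refine pv_strictMono cval k x (by omega) ?_
    exact lt_trans (hposlt b) hsucc_card
  · intro i
    constructor
    · rw [← pv_Jpos hx t.castSucc]
      exact pv_strictMono cval k x (by omega) (lt_trans (hposlt i) hsucc_card)
    · rw [← pv_Jpos hx t.succ]
      exact pv_strictMono cval k x (hposlt i) hsucc_card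

lemma fwd_inj (hg : Good C f) {x x' : V → ℤ}
    (hx : rnk cval k x = f) (hx' : rnk cval k x' = f)
    (h : fwd cval k f x = fwd cval k f x') : x = x' := by
  funext v
  have key : ∀ (z : V → ℤ), rnk cval k z = f → z v = pv cval k z (f (Sum.inl v)) := by
    intro z hz
    have := pv_rnk cval k z (Sum.inl v)
    rw [hz] at this
    exact this.symm
  rw [key x hx, key x' hx']
  have hfe : ((f (Sum.inl v)) : ℕ) ≤ Jpos f (Fin.last r') := hg.2.2.2.1 (Sum.inl v)
  rcases classify hg hfe with ⟨t, hJt⟩ | ⟨t, ht1, ht2⟩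
  · rw [← hJt, pv_Jpos hx, pv_Jpos hx']
  · have hidx : (f (Sum.inl v) : ℕ) - Jpos f t.castSucc - 1 < gap f t := by
      simp only [gap]; omega
    have hpos : Jpos f t.castSucc + 1 + ((f (Sum.inl v) : ℕ) - Jpos f t.castSucc - 1) =
        (f (Sum.inl v) : ℕ) := by omega
    have h1 := congrFun (congrFun h t) ⟨(f (Sum.inl v) : ℕ) - Jpos f t.castSucc - 1, hidx⟩
    simp only [fwd, hpos] at h1
    exact h1

lemma fwd_xofy (hg : Good C f) (hc : StrictMono cval) (hk : 0 < k)
    (y : ∀ t : Fin r', SMset (gap f t) ((k:ℤ) * cval t.castSucc) ((k:ℤ) * cval t.succ)) :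
    fwd cval k f (xofy cval k f y) = fun t => (y t).1 := by
  funext t i
  have hcs : Jpos f t.castSucc < Jpos f t.succ := J_lt_of_lt hg (Fin.castSucc_lt_succ (i := t))
  have higap := i.isLt
  simp only [gap] at higap
  have hpos1 : Jpos f t.castSucc < Jpos f t.castSucc + 1 + (i : ℕ) := by omega
  have hpos2 : Jpos f t.castSucc + 1 + (i : ℕ) < Jpos f t.succ := by omega
  have hple : Jpos f t.castSucc + 1 + (i : ℕ) ≤ Jpos f (Fin.last r') := by
    have := J_le_of_le hg (Fin.le_last t.succ)
    omega
  rw [fwd, pv_xofy hg hc hk hple, Wfun_gap hg hpos1 hpos2]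
  refine congrArg _ ?_
  rw [Fin.ext_iff]
  simp only []
  omega

lemma card_Xf_good (hg : Good C f) (hc : StrictMono cval) (hk : 0 < k) :
    Nat.card (Xf cval C k f) =
      ∏ t : Fin r', (k * dd cval t - 1).choose (gap f t) := by
  have hbij : Function.Bijective
      (fun (x : Xf cval C k f) (t : Fin r') =>
        (⟨fwd cval k f x.1 t, fwd_mem hg x.2.2 t⟩ :
          SMset (gap f t) ((k:ℤ) * cval t.castSucc) ((k:ℤ) * cval t.succ))) := by
    constructor
    · intro x x' hxx'
      apply Subtype.ext
      refine fwd_inj hg x.2.2 x'.2.2 ?_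
      funext t i
      have := congrFun hxx' t
      exact congrFun (congrArg Subtype.val this) i
    · intro y
      refine ⟨⟨xofy cval k f y, xofy_mem_Sol hg hc hk, rnk_xofy hg hc hk⟩, ?_⟩
      funext t
      apply Subtype.ext
      exact congrFun (fwd_xofy hg hc hk y) t
  rw [Nat.card_eq_of_bijective _ hbij, Nat.card_pi]
  refine Finset.prod_congr rfl ?_
  intro t _
  rw [card_SMset]
  congr 1
  have hcc : cval t.castSucc < cval t.succ := hc (Fin.castSucc_lt_succ (i := t))
  have h1 : 1 ≤ k * (cval t.succ - cval t.castSucc) := by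
    have : 1 ≤ cval t.succ - cval t.castSucc := by omega
    calc 1 = 1 * 1 := rfl
    _ ≤ k * (cval t.succ - cval t.castSucc) := Nat.mul_le_mul hk this
  have : ((k:ℤ) * cval t.succ - (k:ℤ) * cval t.castSucc - 1) =
      ((k * dd cval t - 1 : ℕ) : ℤ) := by
    simp only [dd]
    push_cast [Nat.cast_sub hcc.le, Nat.cast_sub h1]
    ring
  rw [this, Int.toNat_natCast]


end GoodCase


section Assemble

variable (cval : Fin (r'+1) → ℕ) (C : Finset ((V ⊕ Fin (r'+1)) × (V ⊕ Fin (r'+1)) × Bool))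

lemma SolSet_finite
    (hsand : ∀ v : V, ∃ a b : Fin (r'+1),
      (Sum.inr a, Sum.inl v, false) ∈ C ∧ (Sum.inl v, Sum.inr b, false) ∈ C)
    (hc : StrictMono cval) (k : ℕ) : (SolSet cval C k).Finite := by
  have hsub : SolSet cval C k ⊆
      Set.pi Set.univ (fun _ : V => Set.Icc ((k:ℤ) * cval 0) ((k:ℤ) * cval (Fin.last r'))) := by
    intro x hx
    intro v _
    obtain ⟨a, b, ha, hb⟩ := hsand v
    have h1 := hx _ ha
    have h2 := hx _ hb
    simp only [holds, if_neg Bool.false_ne_true, ival] at h1 h2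
    exact ⟨le_trans (kcval_le cval k hc (Fin.zero_le a)) h1,
      le_trans h2 (kcval_le cval k hc (Fin.le_last b))⟩
  exact Set.Finite.subset (Set.Finite.pi (fun _ => Set.finite_Icc _ _)) hsub

lemma card_decomp (k : ℕ) (hfin : (SolSet cval C k).Finite) :
    Nat.card (SolSet cval C k) =
      ∑ f : (V ⊕ Fin (r'+1)) → Fin (M V (r'+1)), Nat.card (Xf cval C k f) := by
  classical
  have e : ↥(SolSet cval C k) ≃
      Σ f : (V ⊕ Fin (r'+1)) → Fin (M V (r'+1)), ↥(Xf cval C k f) :=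
    { toFun := fun x => ⟨rnk cval k x.1, ⟨x.1, x.2, rfl⟩⟩
      invFun := fun p => ⟨p.2.1, p.2.2.1⟩
      left_inv := fun x => rfl
      right_inv := by
        rintro ⟨f, x, hx, hr⟩
        subst hr
        rfl }
  have hXf : ∀ f, (Xf cval C k f).Finite := fun f => hfin.subset (fun x hx => hx.1)
  haveI : ∀ f : (V ⊕ Fin (r'+1)) → Fin (M V (r'+1)), Fintype ↥(Xf cval C k f) :=
    fun f => (hXf f).fintype
  rw [Nat.card_congr e, Nat.card_eq_fintype_card, Fintype.card_sigma]
  refine Finset.sum_congr rfl ?_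
  intro f _
  rw [Nat.card_eq_fintype_card]

open scoped Classical in
/-- The polynomial counting solutions with pattern `f`. -/
noncomputable def patPoly (f : (V ⊕ Fin (r'+1)) → Fin (M V (r'+1))) : Polynomial ℚ :=
  if Good C f then ∏ t : Fin r', chPoly (gap f t) (dd cval t) else 0

lemma patPoly_eval (hc : StrictMono cval)
    (hsand : ∀ v : V, ∃ a b : Fin (r'+1),
      (Sum.inr a, Sum.inl v, false) ∈ C ∧ (Sum.inl v, Sum.inr b, false) ∈ C)
    (f : (V ⊕ Fin (r'+1)) → Fin (M V (r'+1))) (k : ℕ) (hk : 0 < k) :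
    (Nat.card (Xf cval C k f) : ℚ) = (patPoly cval C f).eval (k : ℚ) := by
  classical
  rw [patPoly]
  by_cases hg : Good C f
  · rw [if_pos hg, card_Xf_good hg hc hk, Polynomial.eval_prod]
    push_cast
    refine Finset.prod_congr rfl ?_
    intro t _
    have hdd : 0 < dd cval t := by
      have := hc (Fin.castSucc_lt_succ (i := t))
      simp only [dd]
      omega
    rw [chPoly_eval _ _ _ hk hdd]
  · rw [if_neg hg]
    have hempty : Xf cval C k f = ∅ := by
      rw [Set.eq_empty_iff_forall_notMem]
      intro x hx
      exact hg (good_of_mem cval C k f hc hk hsand hx)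
    rw [hempty]
    simp

theorem abstract_poly (hc : StrictMono cval)
    (hsand : ∀ v : V, ∃ a b : Fin (r'+1),
      (Sum.inr a, Sum.inl v, false) ∈ C ∧ (Sum.inl v, Sum.inr b, false) ∈ C) :
    ∃ p : Polynomial ℚ, ∀ k : ℕ, 0 < k →
      (Nat.card (SolSet cval C k) : ℚ) = p.eval (k : ℚ) := by
  classical
  refine ⟨∑ f : (V ⊕ Fin (r'+1)) → Fin (M V (r'+1)), patPoly cval C f, ?_⟩
  intro k hk
  rw [card_decomp cval C k (SolSet_finite cval C hsand hc k), Polynomial.eval_finset_sum]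
  push_cast
  refine Finset.sum_congr rfl ?_
  intro f _
  exact patPoly_eval cval C hc hsand f k hk

end Assemble


end Stretch


namespace StretchList

/-- `rowOf d n` : the weakly increasing list with `d t` copies of `t+1` for `t < n`. -/
def rowOf (d : ℕ → ℕ) (n : ℕ) : List ℕ :=
  (List.range n).flatMap (fun t => List.replicate (d t) (t+1))

lemma rowOf_succ (d : ℕ → ℕ) (n : ℕ) :
    rowOf d (n+1) = rowOf d n ++ List.replicate (d n) (n+1) := by
  rw [rowOf, List.range_succ, List.flatMap_append]
  simp [rowOf]

lemma mem_rowOf {d : ℕ → ℕ} {n a : ℕ} (h : a ∈ rowOf d n) : 1 ≤ a ∧ a ≤ n := by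
  rw [rowOf, List.mem_flatMap] at h
  obtain ⟨t, ht, ha⟩ := h
  rw [List.mem_range] at ht
  rw [List.eq_of_mem_replicate ha]
  omega

lemma sorted_rowOf (d : ℕ → ℕ) (n : ℕ) : (rowOf d n).Pairwise (· ≤ ·) := by
  induction n with
  | zero => simp [rowOf]
  | succ n ih =>
    rw [rowOf_succ]
    rw [List.pairwise_append]
    refine ⟨ih, List.pairwise_replicate.mpr (Or.inr le_rfl), ?_⟩
    intro a ha b hb
    have h1 := mem_rowOf ha
    have := List.eq_of_mem_replicate hb
    omega

lemma count_rowOf (d : ℕ → ℕ) (n a : ℕ) :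
    (rowOf d n).count a = if 1 ≤ a ∧ a ≤ n then d (a-1) else 0 := by
  induction n with
  | zero =>
    simp only [rowOf, List.range_zero, List.flatMap_nil, List.count_nil]
    rw [if_neg (by omega)]
  | succ n ih =>
    rw [rowOf_succ, List.count_append, ih, List.count_replicate]
    by_cases h1 : a = n+1
    · subst h1
      rw [if_neg (show ¬(1 ≤ n+1 ∧ n+1 ≤ n) by omega),
        if_pos (show 1 ≤ n+1 ∧ n+1 ≤ n+1 by omega)]
      simp
    · have hbeq : ((n+1 : ℕ) == a) = false := by
        rw [beq_eq_false_iff_ne]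
        exact Ne.symm h1
      rw [hbeq]
      simp only [Bool.false_eq_true, if_false, add_zero]
      split_ifs <;> first | rfl | omega

lemma countP_rowOf (d : ℕ → ℕ) (n t : ℕ) :
    (rowOf d n).countP (fun a => decide (a ≤ t)) = (Finset.range (min t n)).sum d := by
  induction n with
  | zero => simp [rowOf]
  | succ n ih =>
    rw [rowOf_succ, List.countP_append, ih]
    have hrep : (List.replicate (d n) (n+1)).countP (fun a => decide (a ≤ t)) =
        if n + 1 ≤ t then d n else 0 := by
      by_cases h : n + 1 ≤ t
      · rw [if_pos h, List.countP_eq_length.mpr, List.length_replicate]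
        intro a ha
        rw [List.eq_of_mem_replicate ha]
        simpa using h
      · rw [if_neg h, List.countP_eq_zero.mpr]
        intro a ha
        rw [List.eq_of_mem_replicate ha]
        simpa using h
    rw [hrep]
    rcases Nat.lt_or_ge t (n+1) with h | h
    · rw [if_neg (by omega), add_zero, min_eq_left (by omega), min_eq_left (by omega)]
    · rw [if_pos h, min_eq_right (by omega), min_eq_right (by omega),
        Finset.sum_range_succ]

lemma length_rowOf (d : ℕ → ℕ) (n : ℕ) :
    (rowOf d n).length = (Finset.range n).sum d := by
  induction n with
  | zero => simp [rowOf]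
  | succ n ih => rw [rowOf_succ, List.length_append, ih, List.length_replicate,
      Finset.sum_range_succ]

/-- Master lemma: in a weakly increasing list, the `p`-th entry is `≤ t` iff
`p` is below the number of entries `≤ t`. -/
lemma sorted_getD_le_iff {l : List ℕ} (hs : l.Pairwise (· ≤ ·)) {p t : ℕ} (hp : p < l.length) :
    (l.getD p 0 ≤ t ↔ p < l.countP (fun a => decide (a ≤ t))) := by
  induction l generalizing p with
  | nil => simp at hp
  | cons b tl ih =>
    rw [List.pairwise_cons] at hs
    rw [List.countP_cons]
    cases p with
    | zero =>
      simp only [List.getD_cons_zero]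
      by_cases hb : b ≤ t
      · rw [decide_eq_true hb, if_pos rfl]
        constructor
        · intro _; omega
        · intro _; exact hb
      · have h0 : tl.countP (fun a => decide (a ≤ t)) = 0 := by
          rw [List.countP_eq_zero]
          intro a ha
          have := hs.1 a ha
          simpa using by omega
        rw [decide_eq_false hb, h0]
        simp only [Bool.false_eq_true, if_false]
        constructor
        · intro h; exact absurd h hb
        · intro h; omega
    | succ p =>
      simp only [List.getD_cons_succ]
      rw [ih hs.2 (by simpa using hp)]
      by_cases hb : b ≤ t
      · rw [decide_eq_true hb, if_pos rfl]
        omega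
      · have h0 : tl.countP (fun a => decide (a ≤ t)) = 0 := by
          rw [List.countP_eq_zero]
          intro a ha
          have := hs.1 a ha
          simpa using by omega
        rw [decide_eq_false hb, h0]
        simp only [Bool.false_eq_true, if_false]
        omega

lemma cnt_succ (l : List ℕ) (a : ℕ) :
    l.countP (fun x => decide (x ≤ a+1)) =
      l.countP (fun x => decide (x ≤ a)) + l.count (a+1) := by
  induction l with
  | nil => simp
  | cons b tl ih =>
    rw [List.countP_cons, List.countP_cons, List.count_cons, ih]
    by_cases h1 : b = a + 1
    · subst h1
      rw [decide_eq_false (by omega : ¬ (a + 1 ≤ a)),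
        decide_eq_true (by omega : a + 1 ≤ a + 1)]
      have hbeq : ((a + 1 : ℕ) == a + 1) = true := by simp
      rw [hbeq]
      simp only [if_pos rfl, Bool.false_eq_true, if_false]
      omega
    · have hbeq : (b == (a + 1 : ℕ)) = false := by
        rw [beq_eq_false_iff_ne]
        exact h1
      rw [hbeq]
      by_cases h2 : b ≤ a
      · rw [decide_eq_true h2, decide_eq_true (by omega : b ≤ a + 1)]
        simp only [if_pos rfl, Bool.false_eq_true, if_false]
        omega
      · rw [decide_eq_false h2, decide_eq_false (by omega : ¬ (b ≤ a + 1))]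
        simp only [Bool.false_eq_true, if_false]
        omega

end StretchList


namespace StretchGT
open Stretch

variable (n : ℕ) (mu nu : ℕ → ℕ)

def Pset : Finset ℕ := ((Finset.range n).image nu ∪ (Finset.range n).image mu) ∪ {0}

lemma zero_mem_Pset : 0 ∈ Pset n mu nu := by simp [Pset]

lemma nu_mem_Pset (i : Fin n) : nu i ∈ Pset n mu nu := by
  simp only [Pset, Finset.mem_union, Finset.mem_image, Finset.mem_range]
  exact Or.inl (Or.inl ⟨i, i.isLt, rfl⟩)

lemma mu_mem_Pset (i : Fin n) : mu i ∈ Pset n mu nu := by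
  simp only [Pset, Finset.mem_union, Finset.mem_image, Finset.mem_range]
  exact Or.inl (Or.inr ⟨i, i.isLt, rfl⟩)

lemma Pset_nonempty : (Pset n mu nu).Nonempty := ⟨0, zero_mem_Pset n mu nu⟩

def rr : ℕ := (Pset n mu nu).card - 1

lemma Pset_card : (Pset n mu nu).card = rr n mu nu + 1 := by
  have := Finset.card_pos.mpr (Pset_nonempty n mu nu)
  unfold rr
  omega

def cval : Fin (rr n mu nu + 1) → ℕ :=
  fun t => (Pset n mu nu).orderEmbOfFin (Pset_card n mu nu) t

lemma cval_strictMono : StrictMono (cval n mu nu) :=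
  ((Pset n mu nu).orderEmbOfFin (Pset_card n mu nu)).strictMono

noncomputable def pinIdx (c : ℕ) (hc : c ∈ Pset n mu nu) : Fin (rr n mu nu + 1) :=
  ((Pset n mu nu).orderIsoOfFin (Pset_card n mu nu)).symm ⟨c, hc⟩

lemma cval_pinIdx (c : ℕ) (hc : c ∈ Pset n mu nu) :
    cval n mu nu (pinIdx n mu nu c hc) = c := by
  have h := ((Pset n mu nu).orderIsoOfFin (Pset_card n mu nu)).apply_symm_apply ⟨c, hc⟩
  have h2 := Finset.coe_orderIsoOfFin_apply (Pset n mu nu) (Pset_card n mu nu)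
    (((Pset n mu nu).orderIsoOfFin (Pset_card n mu nu)).symm ⟨c, hc⟩)
  unfold cval pinIdx
  rw [← h2, h]

/-- The variables: position `(t, i)` is row `t` of the GT pattern, entry `i`. -/
abbrev VV (n : ℕ) : Type := Fin (n+1) × Fin n

/-- Menu of constraints for the GT pattern system. -/
def CPred (c : (VV n ⊕ Fin (rr n mu nu + 1)) × (VV n ⊕ Fin (rr n mu nu + 1)) × Bool) :
    Prop :=
  c.2.2 = false ∧ (
    (∃ p : Fin n × Fin n, c.1 = Sum.inl (p.1.castSucc, p.2) ∧
        c.2.1 = Sum.inl (p.1.succ, p.2)) ∨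
    (∃ p : Fin n × Fin n × Fin n, (p.2.2 : ℕ) = (p.2.1 : ℕ) + 1 ∧
        c.1 = Sum.inl (p.1.succ, p.2.2) ∧ c.2.1 = Sum.inl (p.1.castSucc, p.2.1)) ∨
    (∃ i : Fin n,
        (c.1 = Sum.inl (0, i) ∧ c.2.1 = Sum.inr (pinIdx n mu nu (nu i) (nu_mem_Pset n mu nu i)))
      ∨ (c.1 = Sum.inr (pinIdx n mu nu (nu i) (nu_mem_Pset n mu nu i)) ∧
          c.2.1 = Sum.inl (0, i))) ∨
    (∃ i : Fin n,
        (c.1 = Sum.inl (Fin.last n, i) ∧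
          c.2.1 = Sum.inr (pinIdx n mu nu (mu i) (mu_mem_Pset n mu nu i)))
      ∨ (c.1 = Sum.inr (pinIdx n mu nu (mu i) (mu_mem_Pset n mu nu i)) ∧
          c.2.1 = Sum.inl (Fin.last n, i))) ∨
    (∃ v : VV n,
        (c.1 = Sum.inr (pinIdx n mu nu 0 (zero_mem_Pset n mu nu)) ∧ c.2.1 = Sum.inl v)
      ∨ (c.1 = Sum.inl v ∧
          c.2.1 = Sum.inr (pinIdx n mu nu ((Pset n mu nu).max' (Pset_nonempty n mu nu))
            (Finset.max'_mem _ _)))))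

open Classical in
noncomputable def CC : Finset
    ((VV n ⊕ Fin (rr n mu nu + 1)) × (VV n ⊕ Fin (rr n mu nu + 1)) × Bool) :=
  Finset.univ.filter (CPred n mu nu)

lemma mem_CC {c} : c ∈ CC n mu nu ↔ CPred n mu nu c := by
  classical
  rw [CC]
  simp [Finset.mem_filter]

lemma hsand_CC : ∀ v : VV n, ∃ a b : Fin (rr n mu nu + 1),
    (Sum.inr a, Sum.inl v, false) ∈ CC n mu nu ∧
    (Sum.inl v, Sum.inr b, false) ∈ CC n mu nu := by
  intro v
  refine ⟨pinIdx n mu nu 0 (zero_mem_Pset n mu nu),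
    pinIdx n mu nu ((Pset n mu nu).max' (Pset_nonempty n mu nu)) (Finset.max'_mem _ _), ?_, ?_⟩
  · rw [mem_CC]
    exact ⟨rfl, Or.inr (Or.inr (Or.inr (Or.inr ⟨v, Or.inl ⟨rfl, rfl⟩⟩)))⟩
  · rw [mem_CC]
    exact ⟨rfl, Or.inr (Or.inr (Or.inr (Or.inr ⟨v, Or.inr ⟨rfl, rfl⟩⟩)))⟩

def GTset (k : ℕ) : Set (Fin (n+1) → Fin n → ℕ) :=
  {g | (∀ i, g 0 i = k * nu i) ∧ (∀ i, g (Fin.last n) i = k * mu i) ∧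
    (∀ (t : Fin n) (i : Fin n), g t.castSucc i ≤ g t.succ i) ∧
    (∀ (t : Fin n) (i i' : Fin n), (i' : ℕ) = (i : ℕ) + 1 → g t.succ i' ≤ g t.castSucc i)}

variable {n : ℕ} {mu nu : ℕ → ℕ} {k : ℕ}

lemma solset_iff (x : VV n → ℤ) :
    x ∈ SolSet (cval n mu nu) (CC n mu nu) k ↔
      ((∀ (t : Fin n) (i : Fin n), x (t.castSucc, i) ≤ x (t.succ, i)) ∧
      (∀ (t : Fin n) (i i' : Fin n), (i' : ℕ) = (i : ℕ) + 1 →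
        x (t.succ, i') ≤ x (t.castSucc, i)) ∧
      (∀ i, x (0, i) = (k:ℤ) * nu i) ∧
      (∀ i, x (Fin.last n, i) = (k:ℤ) * mu i)) := by
  constructor
  · intro hx
    refine ⟨?_, ?_, ?_, ?_⟩
    · intro t i
      have hc : ((Sum.inl (t.castSucc, i), Sum.inl (t.succ, i), false) :
          (VV n ⊕ Fin (rr n mu nu + 1)) × (VV n ⊕ Fin (rr n mu nu + 1)) × Bool) ∈
          CC n mu nu := by
        rw [mem_CC]; exact ⟨rfl, Or.inl ⟨(t, i), rfl, rfl⟩⟩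
      have := hx _ hc
      simpa [holds, ival] using this
    · intro t i i' hii
      have hc : ((Sum.inl (t.succ, i'), Sum.inl (t.castSucc, i), false) :
          (VV n ⊕ Fin (rr n mu nu + 1)) × (VV n ⊕ Fin (rr n mu nu + 1)) × Bool) ∈
          CC n mu nu := by
        rw [mem_CC]; exact ⟨rfl, Or.inr (Or.inl ⟨(t, i, i'), hii, rfl, rfl⟩)⟩
      have := hx _ hc
      simpa [holds, ival] using this
    · intro i
      have hc1 : ((Sum.inl ((0 : Fin (n+1)), i),
          Sum.inr (pinIdx n mu nu (nu i) (nu_mem_Pset n mu nu i)), false) :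
          (VV n ⊕ Fin (rr n mu nu + 1)) × (VV n ⊕ Fin (rr n mu nu + 1)) × Bool) ∈
          CC n mu nu := by
        rw [mem_CC]; exact ⟨rfl, Or.inr (Or.inr (Or.inl ⟨i, Or.inl ⟨rfl, rfl⟩⟩))⟩
      have hc2 : ((Sum.inr (pinIdx n mu nu (nu i) (nu_mem_Pset n mu nu i)),
          Sum.inl ((0 : Fin (n+1)), i), false) :
          (VV n ⊕ Fin (rr n mu nu + 1)) × (VV n ⊕ Fin (rr n mu nu + 1)) × Bool) ∈
          CC n mu nu := by
        rw [mem_CC]; exact ⟨rfl, Or.inr (Or.inr (Or.inl ⟨i, Or.inr ⟨rfl, rfl⟩⟩))⟩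
      have h1 := hx _ hc1
      have h2 := hx _ hc2
      simp only [holds, ival, if_neg Bool.false_ne_true, cval_pinIdx] at h1 h2
      omega
    · intro i
      have hc1 : ((Sum.inl ((Fin.last n), i),
          Sum.inr (pinIdx n mu nu (mu i) (mu_mem_Pset n mu nu i)), false) :
          (VV n ⊕ Fin (rr n mu nu + 1)) × (VV n ⊕ Fin (rr n mu nu + 1)) × Bool) ∈
          CC n mu nu := by
        rw [mem_CC]; exact ⟨rfl, Or.inr (Or.inr (Or.inr (Or.inl ⟨i, Or.inl ⟨rfl, rfl⟩⟩)))⟩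
      have hc2 : ((Sum.inr (pinIdx n mu nu (mu i) (mu_mem_Pset n mu nu i)),
          Sum.inl ((Fin.last n), i), false) :
          (VV n ⊕ Fin (rr n mu nu + 1)) × (VV n ⊕ Fin (rr n mu nu + 1)) × Bool) ∈
          CC n mu nu := by
        rw [mem_CC]; exact ⟨rfl, Or.inr (Or.inr (Or.inr (Or.inl ⟨i, Or.inr ⟨rfl, rfl⟩⟩)))⟩
      have h1 := hx _ hc1
      have h2 := hx _ hc2
      simp only [holds, ival, if_neg Bool.false_ne_true, cval_pinIdx] at h1 h2
      omega
  · rintro ⟨h1, h2, h3, h4⟩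
    have chain0 : ∀ (t : Fin (n+1)) (i : Fin n), x (0, i) ≤ x (t, i) := by
      intro t i
      induction t using Fin.induction with
      | zero => exact le_rfl
      | succ t ih => exact le_trans ih (h1 t i)
    have chainL : ∀ (t : Fin (n+1)) (i : Fin n), x (t, i) ≤ x (Fin.last n, i) := by
      intro t i
      induction t using Fin.reverseInduction with
      | last => exact le_rfl
      | cast t ih => exact le_trans (h1 t i) ih
    intro c hc
    rw [mem_CC] at hc
    obtain ⟨hfalse, hcase⟩ := hc
    rw [holds, hfalse]
    simp only [Bool.false_eq_true, if_false]
    rcases hcase with ⟨p, e1, e2⟩ | ⟨p, hp, e1, e2⟩ | ⟨i, ⟨e1, e2⟩ | ⟨e1, e2⟩⟩ |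
      ⟨i, ⟨e1, e2⟩ | ⟨e1, e2⟩⟩ | ⟨v, ⟨e1, e2⟩ | ⟨e1, e2⟩⟩ <;> rw [e1, e2]
    · exact h1 p.1 p.2
    · exact h2 p.1 p.2.1 p.2.2 hp
    · simp only [ival, cval_pinIdx]
      exact le_of_eq (h3 i)
    · simp only [ival, cval_pinIdx]
      exact le_of_eq (h3 i).symm
    · simp only [ival, cval_pinIdx]
      exact le_of_eq (h4 i)
    · simp only [ival, cval_pinIdx]
      exact le_of_eq (h4 i).symm
    · simp only [ival, cval_pinIdx]
      obtain ⟨t, i⟩ := v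
      calc (k:ℤ) * (0:ℕ) = 0 := by simp
      _ ≤ (k:ℤ) * nu i := by positivity
      _ = x (0, i) := (h3 i).symm
      _ ≤ x (t, i) := chain0 t i
    · simp only [ival, cval_pinIdx]
      obtain ⟨t, i⟩ := v
      calc x (t, i) ≤ x (Fin.last n, i) := chainL t i
      _ = (k:ℤ) * mu i := h4 i
      _ ≤ (k:ℤ) * ((Pset n mu nu).max' (Pset_nonempty n mu nu)) := by
        have hle : mu i ≤ (Pset n mu nu).max' (Pset_nonempty n mu nu) :=
          Finset.le_max' _ _ (mu_mem_Pset n mu nu i)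
        have : ((mu i : ℕ) : ℤ) ≤ ((Pset n mu nu).max' (Pset_nonempty n mu nu) : ℤ) := by
          exact_mod_cast hle
        exact mul_le_mul_of_nonneg_left this (by positivity)

lemma solset_nonneg {x : VV n → ℤ} (hx : x ∈ SolSet (cval n mu nu) (CC n mu nu) k)
    (t : Fin (n+1)) (i : Fin n) : 0 ≤ x (t, i) := by
  rw [solset_iff] at hx
  obtain ⟨h1, h2, h3, h4⟩ := hx
  have chain0 : ∀ (t : Fin (n+1)), x (0, i) ≤ x (t, i) := by
    intro t
    induction t using Fin.induction with
    | zero => exact le_rfl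
    | succ t ih => exact le_trans ih (h1 t i)
  calc (0:ℤ) ≤ (k:ℤ) * nu i := by positivity
  _ = x (0, i) := (h3 i).symm
  _ ≤ x (t, i) := chain0 t

lemma mem_solset_of_gt {g : Fin (n+1) → Fin n → ℕ} (hg : g ∈ GTset n mu nu k) :
    (fun v : VV n => (g v.1 v.2 : ℤ)) ∈ SolSet (cval n mu nu) (CC n mu nu) k := by
  obtain ⟨hg1, hg2, hg3, hg4⟩ := hg
  rw [solset_iff]
  refine ⟨fun t i => ?_, fun t i i' h => ?_, fun i => ?_, fun i => ?_⟩
  · exact_mod_cast hg3 t i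
  · exact_mod_cast hg4 t i i' h
  · show ((g 0 i : ℕ) : ℤ) = (k:ℤ) * (nu i : ℕ)
    rw [hg1 i]; push_cast; ring
  · show ((g (Fin.last n) i : ℕ) : ℤ) = (k:ℤ) * (mu i : ℕ)
    rw [hg2 i]; push_cast; ring

lemma mem_gt_of_solset {x : VV n → ℤ} (hx : x ∈ SolSet (cval n mu nu) (CC n mu nu) k) :
    (fun (t : Fin (n+1)) (i : Fin n) => (x (t, i)).toNat) ∈ GTset n mu nu k := by
  have hnn := solset_nonneg hx
  rw [solset_iff] at hx
  obtain ⟨h1, h2, h3, h4⟩ := hx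
  refine ⟨fun i => ?_, fun i => ?_, fun t i => ?_, fun t i i' h => ?_⟩
  · show (x (0, i)).toNat = k * nu i
    rw [h3 i]
    exact_mod_cast Int.toNat_natCast _
  · show (x (Fin.last n, i)).toNat = k * mu i
    rw [h4 i]
    exact_mod_cast Int.toNat_natCast _
  · exact Int.toNat_le_toNat (h1 t i)
  · exact Int.toNat_le_toNat (h2 t i i' h)

noncomputable def gtEquiv (k : ℕ) :
    ↥(GTset n mu nu k) ≃ ↥(SolSet (cval n mu nu) (CC n mu nu) k) where
  toFun g := ⟨fun v => (g.1 v.1 v.2 : ℤ), mem_solset_of_gt g.2⟩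
  invFun x := ⟨fun t i => (x.1 (t, i)).toNat, mem_gt_of_solset x.2⟩
  left_inv g := by
    apply Subtype.ext
    funext t i
    show (((g.1 t i : ℕ) : ℤ)).toNat = g.1 t i
    exact Int.toNat_natCast _
  right_inv x := by
    apply Subtype.ext
    funext v
    show (((x.1 (v.1, v.2)).toNat : ℕ) : ℤ) = x.1 v
    rw [Int.toNat_of_nonneg (solset_nonneg x.2 v.1 v.2)]

section TabsGT
open StretchList

variable {n : ℕ} {mu nu : ℕ → ℕ} {k : ℕ}

/-- The GT pattern of a tableau. -/
def gOf (T : SkewTab n) (k : ℕ) (nu : ℕ → ℕ) : Fin (n+1) → Fin n → ℕ :=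
  fun t i => k * nu i + (T.row i).countP (fun a => decide (a ≤ (t : ℕ)))

/-- The multiplicity function extracted from a GT pattern. -/
def dOf (g : Fin (n+1) → Fin n → ℕ) (i : Fin n) : ℕ → ℕ := fun t =>
  if h : t < n then g ⟨t+1, by omega⟩ i - g ⟨t, by omega⟩ i else 0

/-- The tableau of a GT pattern. -/
def TOf (g : Fin (n+1) → Fin n → ℕ) (k : ℕ) (nu : ℕ → ℕ) : SkewTab n where
  inner := fun i => k * nu i
  row := fun i => if h : i < n then rowOf (dOf g ⟨i, h⟩) n else []

variable {g : Fin (n+1) → Fin n → ℕ}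

lemma gstep (hg : g ∈ GTset n mu nu k) (i : Fin n) (tn : ℕ) (h : tn < n) :
    g ⟨tn, by omega⟩ i ≤ g ⟨tn+1, by omega⟩ i := by
  have h3 := hg.2.2.1 ⟨tn, h⟩ i
  have e1 : (⟨tn, h⟩ : Fin n).castSucc = ⟨tn, by omega⟩ := by
    apply Fin.ext; simp
  have e2 : (⟨tn, h⟩ : Fin n).succ = ⟨tn+1, by omega⟩ := by
    apply Fin.ext; simp
  rwa [e1, e2] at h3

lemma gmono (hg : g ∈ GTset n mu nu k) (i : Fin n) {a b : ℕ} (hab : a ≤ b) (hb : b ≤ n) :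
    g ⟨a, by omega⟩ i ≤ g ⟨b, by omega⟩ i := by
  induction b with
  | zero => have : a = 0 := by omega
            subst this; exact le_rfl
  | succ b ih =>
    rcases Nat.eq_or_lt_of_le hab with h | h
    · subst h; exact le_rfl
    · exact le_trans (ih (by omega) (by omega)) (gstep hg i b (by omega))

lemma g_zero_eq (hg : g ∈ GTset n mu nu k) (i : Fin n) {h0 : 0 < n+1} :
    g ⟨0, h0⟩ i = k * nu i := by
  have : (⟨0, h0⟩ : Fin (n+1)) = 0 := by apply Fin.ext; simp
  rw [this]; exact hg.1 i

lemma g_last_eq (hg : g ∈ GTset n mu nu k) (i : Fin n) {hn' : n < n+1} :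
    g ⟨n, hn'⟩ i = k * mu i := by
  have : (⟨n, hn'⟩ : Fin (n+1)) = Fin.last n := rfl
  rw [this]; exact hg.2.1 i

lemma cnt_TOf (hg : g ∈ GTset n mu nu k) (i : Fin n) (t : ℕ) (ht : t ≤ n) :
    k * nu i + (rowOf (dOf g i) n).countP (fun a => decide (a ≤ t)) =
      g ⟨t, by omega⟩ i := by
  rw [countP_rowOf, min_eq_left ht]
  induction t with
  | zero =>
    rw [Finset.range_zero, Finset.sum_empty, add_zero, g_zero_eq hg]
  | succ t ih =>
    rw [Finset.sum_range_succ]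
    have hd : dOf g i t = g ⟨t+1, by omega⟩ i - g ⟨t, by omega⟩ i := dif_pos (by omega)
    have hstep := gstep hg i t (by omega)
    have hih : k * nu i + ∑ x ∈ Finset.range t, dOf g i x = g ⟨t, by omega⟩ i :=
      ih (by omega)
    omega

lemma len_TOf (hg : g ∈ GTset n mu nu k) (i : Fin n) :
    k * nu i + (rowOf (dOf g i) n).length = k * mu i := by
  have hlen : (rowOf (dOf g i) n).length =
      (rowOf (dOf g i) n).countP (fun a => decide (a ≤ n)) := by
    rw [List.countP_eq_length.mpr]
    intro a ha
    exact decide_eq_true (mem_rowOf ha).2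
  rw [hlen, cnt_TOf hg i n le_rfl, g_last_eq hg]

variable (hm : IsPartition mu) (hn : IsPartition nu)
  (hmlen : ∀ i, n ≤ i → mu i = 0) (hnlen : ∀ i, n ≤ i → nu i = 0)
  (hnm : ∀ i, nu i ≤ mu i)

include hm hn hmlen hnlen hnm in
lemma TOf_outer (hg : g ∈ GTset n mu nu k) : (TOf g k nu).outer = fun i => k * mu i := by
  funext i
  rw [SkewTab.outer, TOf]
  by_cases h : i < n
  · simp only [dif_pos h]
    exact len_TOf hg ⟨i, h⟩
  · simp only [dif_neg h]
    rw [hnlen i (by omega), hmlen i (by omega)]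
    simp

include hm hn hmlen hnlen hnm in
lemma TOf_mem (hg : g ∈ GTset n mu nu k) :
    TOf g k nu ∈ Tabs n (fun i => k * mu i) (fun i => k * nu i) := by
  have houter := TOf_outer hm hn hmlen hnlen hnm hg
  have hinner : (TOf g k nu).inner = fun i => k * nu i := rfl
  refine ⟨⟨?_, ?_, ?_, ?_, ?_⟩, hinner, houter⟩
  · -- inner partition
    exact ⟨fun a b hab => Nat.mul_le_mul_left k (hn.1 a b hab),
      ⟨n, fun i hi => by rw [hinner]; simp [hnlen i hi]⟩⟩
  · rw [houter]
    exact ⟨fun a b hab => Nat.mul_le_mul_left k (hm.1 a b hab),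
      ⟨n, fun i hi => by simp [hmlen i hi]⟩⟩
  · -- sorted rows
    intro i
    rw [TOf]
    by_cases h : i < n
    · simp only [dif_pos h]
      exact sorted_rowOf _ _
    · simp only [dif_neg h]
      exact List.Pairwise.nil
  · -- bounds
    intro i a ha
    rw [TOf] at ha
    by_cases h : i < n
    · simp only [dif_pos h] at ha
      exact mem_rowOf ha
    · simp only [dif_neg h] at ha
      simp at ha
  · -- column strictness
    intro i j hij1 hij2 hij3 hij4
    have hi1 : i + 1 < n := by
      by_contra hcon
      push_neg at hcon
      have : (TOf g k nu).outer (i+1) = k * nu (i+1) := by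
        rw [SkewTab.outer, TOf]
        simp only [dif_neg (by omega : ¬ (i + 1 < n))]
        rfl
      rw [this] at hij4
      simp only [hinner] at hij3
      omega
    have hi0 : i < n := by omega
    -- rows
    have hrow1 : (TOf g k nu).row i = rowOf (dOf g ⟨i, hi0⟩) n := by
      rw [TOf]; simp only [dif_pos hi0]
    have hrow2 : (TOf g k nu).row (i+1) = rowOf (dOf g ⟨i+1, hi1⟩) n := by
      rw [TOf]; simp only [dif_pos hi1]
    simp only [SkewTab.entry, hrow1, hrow2, hinner]
    simp only [hinner] at hij1 hij3
    simp only [houter] at hij2 hij4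
    set l1 := rowOf (dOf g ⟨i, hi0⟩) n with hl1
    set l2 := rowOf (dOf g ⟨i+1, hi1⟩) n with hl2
    have hlen1 : k * nu i + l1.length = k * mu i := len_TOf hg ⟨i, hi0⟩
    have hlen2 : k * nu (i+1) + l2.length = k * mu (i+1) := len_TOf hg ⟨i+1, hi1⟩
    have hp1 : j - k * nu i < l1.length := by omega
    have hp2 : j - k * nu (i+1) < l2.length := by omega
    set e1 := l1.getD (j - k * nu i) 0 with he1
    set e2 := l2.getD (j - k * nu (i+1)) 0 with he2
    have he1mem : e1 ∈ l1 := by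
      rw [he1, List.getD_eq_getElem l1 0 hp1]
      exact List.getElem_mem hp1
    have he1b : 1 ≤ e1 ∧ e1 ≤ n := mem_rowOf he1mem
    by_contra hcon
    push_neg at hcon
    -- hcon : e2 ≤ e1
    have he2le : e2 ≤ e1 := hcon
    have hmaster2 : j - k * nu (i+1) < l2.countP (fun a => decide (a ≤ e1)) := by
      rw [← sorted_getD_le_iff (sorted_rowOf _ _) hp2]
      exact he2le
    have hcnt2 : k * nu (i+1) + l2.countP (fun a => decide (a ≤ e1)) =
        g ⟨e1, by omega⟩ ⟨i+1, hi1⟩ := cnt_TOf hg ⟨i+1, hi1⟩ e1 he1b.2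
    have hinterlace : g ⟨e1, by omega⟩ ⟨i+1, hi1⟩ ≤ g ⟨e1 - 1, by omega⟩ ⟨i, hi0⟩ := by
      have h4 := hg.2.2.2 ⟨e1 - 1, by omega⟩ ⟨i, hi0⟩ ⟨i+1, hi1⟩ (by simp)
      have et : (⟨e1 - 1, by omega⟩ : Fin n).succ = ⟨e1, by omega⟩ := by
        apply Fin.ext; simp; omega
      have ec : (⟨e1 - 1, by omega⟩ : Fin n).castSucc = ⟨e1 - 1, by omega⟩ := by
        apply Fin.ext; simp
      rwa [et, ec] at h4
    have hcnt1 : k * nu i + l1.countP (fun a => decide (a ≤ e1 - 1)) =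
        g ⟨e1 - 1, by omega⟩ ⟨i, hi0⟩ := cnt_TOf hg ⟨i, hi0⟩ (e1 - 1) (by omega)
    have hj2 : j < k * nu (i+1) + l2.countP (fun a => decide (a ≤ e1)) := by omega
    have hj1 : j - k * nu i < l1.countP (fun a => decide (a ≤ e1 - 1)) := by omega
    have : e1 ≤ e1 - 1 := by
      rw [sorted_getD_le_iff (sorted_rowOf _ _) hp1]
      exact hj1
    omega

variable {T : SkewTab n}

include hm hn hmlen hnlen hnm in
lemma gOf_mem (hT : T ∈ Tabs n (fun i => k * mu i) (fun i => k * nu i)) :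
    gOf T k nu ∈ GTset n mu nu k := by
  obtain ⟨⟨hpi, hpo, hsort, hbnd, hcol⟩, hinner, houter⟩ := hT
  have hlen' : ∀ a : Fin n, k * nu (a : ℕ) + (T.row (a : ℕ)).length = k * mu (a : ℕ) := by
    intro a
    have h1 := congrFun houter (a : ℕ)
    simp only [SkewTab.outer, hinner] at h1
    exact h1
  refine ⟨fun i => ?_, fun i => ?_, fun t i => ?_, fun t i i' h => ?_⟩
  · -- bottom row
    rw [gOf]
    have h0 : (T.row (i:ℕ)).countP (fun a => decide (a ≤ ((0 : Fin (n+1)) : ℕ))) = 0 := by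
      rw [List.countP_eq_zero]
      intro a ha
      have := (hbnd (i:ℕ) a ha).1
      simp only [Fin.val_zero, decide_eq_true_eq]
      exact fun h => absurd (of_decide_eq_true h) (by simp; omega)
    rw [h0]
    omega
  · -- top row
    rw [gOf]
    have h0 : (T.row (i:ℕ)).countP (fun a => decide (a ≤ ((Fin.last n : Fin (n+1)) : ℕ))) =
        (T.row (i:ℕ)).length := by
      rw [List.countP_eq_length]
      intro a ha
      have := (hbnd (i:ℕ) a ha).2
      simp only [Fin.val_last, decide_eq_true_eq]
      omega
    rw [h0]
    exact hlen' i
  · -- weakly increasing in t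
    simp only [gOf, Fin.coe_castSucc, Fin.val_succ]
    rw [cnt_succ]
    omega
  · -- interlacing
    simp only [gOf, Fin.coe_castSucc, Fin.val_succ]
    set c := (T.row (i':ℕ)).countP (fun a => decide (a ≤ (t:ℕ)+1)) with hcdef
    rcases Nat.eq_zero_or_pos c with hc0 | hc0
    · have h1 : nu (i':ℕ) ≤ nu (i:ℕ) := hn.1 _ _ (by omega)
      have h2 := Nat.mul_le_mul_left k h1
      omega
    · have hclen : c ≤ (T.row (i':ℕ)).length := List.countP_le_length
      set j := k * nu (i':ℕ) + c - 1 with hjdef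
      have hp2 : j - k * nu (i':ℕ) < (T.row (i':ℕ)).length := by omega
      have he2 : (T.row (i':ℕ)).getD (j - k * nu (i':ℕ)) 0 ≤ (t:ℕ)+1 := by
        rw [sorted_getD_le_iff (hsort _) hp2]
        omega
      rcases Nat.lt_or_ge j (k * nu (i:ℕ)) with hjlt | hjge
      · omega
      · have hup : j < T.outer (i':ℕ) := by
          simp only [SkewTab.outer, hinner]
          omega
        have hup0 : j < T.outer (i:ℕ) := by
          simp only [SkewTab.outer, hinner]
          have hmm : mu (i':ℕ) ≤ mu (i:ℕ) := hm.1 _ _ (by omega)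
          have h2 := Nat.mul_le_mul_left k hmm
          have h3 := hlen' i
          have h4 := hlen' i'
          omega
        have hlow0 : T.inner (i:ℕ) ≤ j := by
          simp only [hinner]
          omega
        have hlow1 : T.inner ((i:ℕ)+1) ≤ j := by
          rw [← h]
          simp only [hinner]
          omega
        have hup1 : j < T.outer ((i:ℕ)+1) := by
          rw [← h]
          exact hup
        have hstrict := hcol (i:ℕ) j hlow0 hup0 hlow1 hup1
        rw [show (i:ℕ) + 1 = (i':ℕ) from h.symm] at hstrict
        simp only [SkewTab.entry, hinner] at hstrict
        have he1lt : (T.row (i:ℕ)).getD (j - k * nu (i:ℕ)) 0 ≤ (t:ℕ) := by omega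
        have hp1 : j - k * nu (i:ℕ) < (T.row (i:ℕ)).length := by
          have h3 := hlen' i
          simp only [SkewTab.outer, hinner] at hup0
          omega
        rw [sorted_getD_le_iff (hsort _) hp1] at he1lt
        omega

include hm hn hmlen hnlen hnm in
lemma TOf_gOf (hT : T ∈ Tabs n (fun i => k * mu i) (fun i => k * nu i)) :
    TOf (gOf T k nu) k nu = T := by
  obtain ⟨⟨hpi, hpo, hsort, hbnd, hcol⟩, hinner, houter⟩ := hT
  have hlen' : ∀ a : ℕ, k * nu a + (T.row a).length = k * mu a := by
    intro a
    have h1 := congrFun houter a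
    simp only [SkewTab.outer, hinner] at h1
    exact h1
  have hext : ∀ (A B : SkewTab n), A.inner = B.inner → A.row = B.row → A = B := by
    intro A B h1 h2
    cases A; cases B
    cases h1; cases h2
    rfl
  refine hext _ _ hinner.symm ?_
  funext i
  by_cases hi : i < n
  · have hrow : (TOf (gOf T k nu) k nu).row i = rowOf (dOf (gOf T k nu) ⟨i, hi⟩) n := by
      rw [TOf]
      simp only [dif_pos hi]
    rw [hrow]
    refine List.Perm.eq_of_pairwise' (sorted_rowOf _ _) (hsort i)
      (List.perm_iff_count.mpr ?_)
    intro a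
    rw [count_rowOf]
    by_cases ha : 1 ≤ a ∧ a ≤ n
    · rw [if_pos ha]
      have hd : dOf (gOf T k nu) ⟨i, hi⟩ (a-1) =
          gOf T k nu ⟨a, by omega⟩ ⟨i, hi⟩ - gOf T k nu ⟨a-1, by omega⟩ ⟨i, hi⟩ := by
        rw [dOf]
        rw [dif_pos (by omega : a - 1 < n)]
        have e1 : (⟨a-1+1, by omega⟩ : Fin (n+1)) = ⟨a, by omega⟩ := by
          apply Fin.ext; simp; omega
        rw [e1]
      rw [hd]
      simp only [gOf]
      have hsucc : (T.row i).countP (fun x => decide (x ≤ a)) =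
          (T.row i).countP (fun x => decide (x ≤ a - 1)) + (T.row i).count a := by
        have := cnt_succ (T.row i) (a-1)
        rwa [show a - 1 + 1 = a by omega] at this
      omega
    · rw [if_neg ha]
      symm
      rw [List.count_eq_zero]
      intro hmem
      have := hbnd i a hmem
      omega
  · have hrow : (TOf (gOf T k nu) k nu).row i = [] := by
      rw [TOf]
      simp only [dif_neg hi]
    rw [hrow]
    have h1 := hlen' i
    rw [hnlen i (by omega), hmlen i (by omega)] at h1
    symm
    rw [← List.length_eq_zero_iff]
    omega

lemma gOf_TOf (hg : g ∈ GTset n mu nu k) : gOf (TOf g k nu) k nu = g := by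
  funext t i
  have hrow : (TOf g k nu).row (i : ℕ) = rowOf (dOf g i) n := by
    show (if h : (i:ℕ) < n then rowOf (dOf g ⟨(i:ℕ), h⟩) n else []) = rowOf (dOf g i) n
    rw [dif_pos i.isLt]
  rw [gOf, hrow]
  have h2 := cnt_TOf hg i (t : ℕ) (by omega)
  rw [h2]

noncomputable def tabsGTEquiv
    (hm : IsPartition mu) (hn : IsPartition nu)
    (hmlen : ∀ i, n ≤ i → mu i = 0) (hnlen : ∀ i, n ≤ i → nu i = 0)
    (hnm : ∀ i, nu i ≤ mu i) (k : ℕ) :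
    ↥(Tabs n (fun i => k * mu i) (fun i => k * nu i)) ≃ ↥(GTset n mu nu k) where
  toFun T := ⟨gOf T.1 k nu, gOf_mem hm hn hmlen hnlen hnm T.2⟩
  invFun g := ⟨TOf g.1 k nu, TOf_mem hm hn hmlen hnlen hnm g.2⟩
  left_inv T := Subtype.ext (TOf_gOf hm hn hmlen hnlen hnm T.2)
  right_inv g := Subtype.ext (gOf_TOf g.2)


end TabsGT


end StretchGT

/-- The number of SSYTs of the stretched shape `kμ/kν` with entries
in `{1,…,n}` is a polynomial function of the positive integer `k`. -/
theorem card_stretched_tabs_polynomial (n : ℕ) (mu nu : ℕ → ℕ)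
    (hm : IsPartition mu) (hn : IsPartition nu)
    (hmlen : ∀ i, n ≤ i → mu i = 0) (hnlen : ∀ i, n ≤ i → nu i = 0)
    (hnm : ∀ i, nu i ≤ mu i) :
    ∃ p : Polynomial ℚ, ∀ k : ℕ, 0 < k →
      (Nat.card ↥(Tabs n (fun i => k * mu i) (fun i => k * nu i)) : ℚ) =
        p.eval (k : ℚ) := by
  obtain ⟨p, hp⟩ := Stretch.abstract_poly (StretchGT.cval n mu nu) (StretchGT.CC n mu nu)
    (StretchGT.cval_strictMono n mu nu) (StretchGT.hsand_CC n mu nu)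
  refine ⟨p, fun k hk => ?_⟩
  rw [← hp k hk]
  congr 1
  exact Nat.card_congr ((StretchGT.tabsGTEquiv hm hn hmlen hnlen hnm k).trans
    (StretchGT.gtEquiv k))
end

section
/- If the Kostka coefficient K_{λ/μ, w} is positive, then for every positive integer k the Kostka coefficient K_{kλ/kμ, kw} is positive. -/
open scoped BigOperators

namespace KostkaStretchAux

/-- Repeat each entry of a list `k` times (in place). -/
def stretchRow (k : ℕ) : List ℕ → List ℕ
  | [] => []
  | a :: l => List.replicate k a ++ stretchRow k l

lemma length_stretchRow (k : ℕ) (l : List ℕ) : (stretchRow k l).length = k * l.length := by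
  induction l with
  | nil => simp [stretchRow]
  | cons a l ih => simp [stretchRow, ih]; ring

lemma count_stretchRow (k v : ℕ) (l : List ℕ) :
    (stretchRow k l).count v = k * l.count v := by
  induction l with
  | nil => simp [stretchRow]
  | cons a l ih =>
    rw [stretchRow, List.count_append, ih, List.count_replicate, List.count_cons]
    by_cases h : a = v <;> simp [h] <;> ring

lemma mem_of_mem_stretchRow {k x : ℕ} {l : List ℕ} (h : x ∈ stretchRow k l) : x ∈ l := by
  induction l with
  | nil => simp [stretchRow] at h
  | cons a l ih =>
    rw [stretchRow, List.mem_append] at h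
    rcases h with h | h
    · simp [List.eq_of_mem_replicate h]
    · exact List.mem_cons_of_mem _ (ih h)

lemma sorted_stretchRow (k : ℕ) {l : List ℕ} (h : l.Pairwise (· ≤ ·)) :
    (stretchRow k l).Pairwise (· ≤ ·) := by
  induction l with
  | nil => simp [stretchRow]
  | cons a l ih =>
    rw [List.pairwise_cons] at h
    rw [stretchRow, List.pairwise_append]
    refine ⟨List.pairwise_replicate.2 (Or.inr le_rfl), ih h.2, ?_⟩
    intro x hx y hy
    rw [List.eq_of_mem_replicate hx]
    exact h.1 y (mem_of_mem_stretchRow hy)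

lemma getD_stretchRow {k : ℕ} (hk : 0 < k) (l : List ℕ) (p : ℕ) :
    (stretchRow k l).getD p 0 = l.getD (p / k) 0 := by
  induction l generalizing p with
  | nil => simp [stretchRow]
  | cons a l ih =>
    by_cases hp : p < k
    · rw [stretchRow, List.getD_append _ _ _ _ (by simpa using hp), Nat.div_eq_of_lt hp,
        List.getD_cons_zero, List.getD_eq_getElem _ _ (by simpa using hp)]
      simp
    · push_neg at hp
      obtain ⟨q, rfl⟩ : ∃ q, p = q + k := ⟨p - k, by omega⟩
      rw [stretchRow, List.getD_append_right _ _ _ _ (by simpa using hp),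
        Nat.add_div_right _ hk, List.length_replicate, Nat.add_sub_cancel, ih,
        List.getD_cons_succ]

lemma isPartition_smul (k : ℕ) {f : ℕ → ℕ} (hf : IsPartition f) :
    IsPartition (fun i => k * f i) := by
  obtain ⟨N, hN⟩ := hf.2
  exact ⟨fun i j hij => Nat.mul_le_mul_left k (hf.1 i j hij),
    ⟨N, fun i hi => by show k * f i = 0; rw [hN i hi, mul_zero]⟩⟩

/-- Horizontal stretch of a skew tableau by factor `k`. -/
def stretch (k : ℕ) {n : ℕ} (T : SkewTab n) : SkewTab n where
  inner := fun i => k * T.inner i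
  row := fun i => stretchRow k (T.row i)

lemma outer_stretch (k : ℕ) {n : ℕ} (T : SkewTab n) :
    (stretch k T).outer = fun i => k * T.outer i := by
  funext i
  simp only [SkewTab.outer, stretch, length_stretchRow]
  ring

lemma entry_stretch {k : ℕ} (hk : 0 < k) {n : ℕ} (T : SkewTab n) (i j : ℕ)
    (hj : k * T.inner i ≤ j) :
    (stretch k T).entry i j = T.entry i (j / k) := by
  show (stretchRow k (T.row i)).getD (j - k * T.inner i) 0 = (T.row i).getD (j / k - T.inner i) 0
  rw [getD_stretchRow hk, Nat.sub_mul_div _ _ _]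

lemma isSSYT_stretch {k : ℕ} (hk : 0 < k) {n : ℕ} {T : SkewTab n} (h : T.IsSSYT) :
    (stretch k T).IsSSYT := by
  obtain ⟨h1, h2, h3, h4, h5⟩ := h
  refine ⟨isPartition_smul k h1, ?_, fun i => sorted_stretchRow k (h3 i),
    fun i x hx => h4 i x (mem_of_mem_stretchRow hx), ?_⟩
  · rw [outer_stretch]; exact isPartition_smul k h2
  · intro i j ha hb hc hd
    have ha' : k * T.inner i ≤ j := ha
    have hc' : k * T.inner (i + 1) ≤ j := hc
    have hb' : j < k * T.outer i := by rwa [congrFun (outer_stretch k T) i] at hb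
    have hd' : j < k * T.outer (i + 1) := by rwa [congrFun (outer_stretch k T) (i + 1)] at hd
    rw [entry_stretch hk T i j ha', entry_stretch hk T (i + 1) j hc']
    exact h5 i (j / k)
      ((Nat.le_div_iff_mul_le hk).2 (by rwa [mul_comm]))
      ((Nat.div_lt_iff_lt_mul hk).2 (by rwa [mul_comm] at hb'))
      ((Nat.le_div_iff_mul_le hk).2 (by rwa [mul_comm]))
      ((Nat.div_lt_iff_lt_mul hk).2 (by rwa [mul_comm] at hd'))

lemma wt_stretch (k : ℕ) {n : ℕ} {T : SkewTab n} {N : ℕ}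
    (hfin : ∀ i, N ≤ i → T.row i = []) (v : ℕ) :
    (stretch k T).wt v = k * T.wt v := by
  have hsupp : (Function.support fun i => ((T.row i).count v)).Finite := by
    apply Set.Finite.subset (Set.finite_Iio N)
    intro i hi
    by_contra hiN
    simp only [Set.mem_Iio, not_lt] at hiN
    exact hi (by simp [hfin i hiN])
  show (∑ᶠ i, ((stretch k T).row i).count v) = k * ∑ᶠ i, (T.row i).count v
  have : ∀ i, ((stretch k T).row i).count v = k * (T.row i).count v := fun i =>
    count_stretchRow k v (T.row i)
  rw [finsum_congr this, ← mul_finsum _ k]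

lemma skewTab_ext {n : ℕ} {T T' : SkewTab n} (h1 : T.inner = T'.inner)
    (h2 : T.row = T'.row) : T = T' := by
  cases T; cases T'; simp_all

lemma finite_tabs {n : ℕ} {A B : ℕ → ℕ} (hA : IsPartition A) (P : SkewTab n → Prop) :
    Finite {T : SkewTab n // T ∈ Tabs n A B ∧ P T} := by
  obtain ⟨N, hN⟩ := hA.2
  refine Finite.of_injective (β := Fin N → Fin (A 0 + 1) → Fin (n + 1))
    (fun T => fun i j => ⟨((T.1.row i).getD j 0) % (n + 1), Nat.mod_lt _ n.succ_pos⟩) ?_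
  intro T T' hEq
  obtain ⟨⟨hS, hI, hO⟩, -⟩ := T.2
  obtain ⟨⟨hS', hI', hO'⟩, -⟩ := T'.2
  apply Subtype.ext
  refine skewTab_ext (hI.trans hI'.symm) ?_
  funext i
  have hlen : B i + (T.1.row i).length = A i := by
    have h := congrFun hO i
    simp only [SkewTab.outer, congrFun hI i] at h
    omega
  have hlen' : B i + (T'.1.row i).length = A i := by
    have h := congrFun hO' i
    simp only [SkewTab.outer, congrFun hI' i] at h
    omega
  by_cases hi : i < N
  · apply List.ext_getElem (by omega)
    intro j hj1 hj2
    have hjL : j < A 0 + 1 := by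
      have := hA.1 0 i (Nat.zero_le i)
      omega
    have hval := congrArg Fin.val (congrFun (congrFun hEq ⟨i, hi⟩) ⟨j, hjL⟩)
    simp only at hval
    rw [List.getD_eq_getElem _ _ hj1, List.getD_eq_getElem _ _ hj2] at hval
    have e1 := hS.2.2.2.1 i _ (List.getElem_mem hj1)
    have e2 := hS'.2.2.2.1 i _ (List.getElem_mem hj2)
    rwa [Nat.mod_eq_of_lt (by omega), Nat.mod_eq_of_lt (by omega)] at hval
  · have hAi : A i = 0 := hN i (by omega)
    have : (T.1.row i).length = 0 := by omega
    have h2 : (T'.1.row i).length = 0 := by omega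
    rw [List.length_eq_zero_iff.1 this, List.length_eq_zero_iff.1 h2]

end KostkaStretchAux

/-- If `K_{λ/μ,w} > 0` then `K_{kλ/kμ,kw} > 0` for every positive
integer `k`. -/
theorem kostka_stretch_pos (n : ℕ) (lam mu : ℕ → ℕ)
    (hl : IsPartition lam) (hm : IsPartition mu) (hml : ∀ i, mu i ≤ lam i)
    (w : Fin n → ℕ) (hpos : 0 < kostka n lam mu w) (k : ℕ) (hk : 0 < k) :
    0 < kostka n (fun i => k * lam i) (fun i => k * mu i) (fun i => k * w i) := by
  open KostkaStretchAux in
  rw [kostka] at hpos ⊢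
  obtain ⟨⟨⟨T, hT, hw⟩⟩, -⟩ := Nat.card_pos_iff.mp hpos
  obtain ⟨hS, hI, hO⟩ := hT
  obtain ⟨N, hN⟩ := hl.2
  have hfin : ∀ i, N ≤ i → T.row i = [] := by
    intro i hi
    have h := congrFun hO i
    simp only [SkewTab.outer, congrFun hI i] at h
    have h2 : mu i ≤ lam i := hml i
    rw [hN i hi] at h
    exact List.length_eq_zero_iff.1 (by omega)
  have hmem : stretch k T ∈ Tabs n (fun i => k * lam i) (fun i => k * mu i) := by
    refine ⟨isSSYT_stretch hk hS, ?_, ?_⟩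
    · funext i
      show k * T.inner i = k * mu i
      rw [hI]
    · rw [outer_stretch]
      funext i
      rw [hO]
  refine Nat.card_pos_iff.mpr ⟨⟨⟨stretch k T, hmem, ?_⟩⟩, finite_tabs (isPartition_smul k hl) _⟩
  intro k'
  rw [wt_stretch k hfin, hw k']
end

section
/- Kostka coefficients are symmetric in the weight: K_{λ/μ, w} = K_{λ/μ, w̄}, where w̄ is the weakly decreasing rearrangement of w. -/
open scoped BigOperators

namespace BKaux
open List

open List

lemma sorted_decomp {x : ℕ} : ∀ {r : List ℕ}, r.Pairwise (· ≤ ·) →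
    r = r.filter (fun z => z < x) ++ List.replicate (r.count x) x ++ r.filter (fun z => x < z) := by
  intro r h
  induction r with
  | nil => simp
  | cons y t ih =>
    have hy : ∀ z ∈ t, y ≤ z := fun z hz => (List.pairwise_cons.1 h).1 z hz
    have ht := (List.pairwise_cons.1 h).2
    have iht := ih ht
    rcases lt_trichotomy y x with hlt | rfl | hgt
    · have hne : (y = x) = False := by simp; omega
      rw [List.filter_cons_of_pos (by simpa using hlt),
          List.filter_cons_of_neg (by simp; omega), List.count_cons]
      simp only [beq_iff_eq, List.cons_append]
      rw [if_neg (by omega), add_zero]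
      exact congrArg _ iht
    · have h1 : t.filter (fun z => z < y) = [] := by
        rw [List.filter_eq_nil_iff]; intro z hz; have := hy z hz; simp; omega
      have h2 : (y :: t).filter (fun z => z < y) = [] := by
        rw [List.filter_cons_of_neg (by simp)]; exact h1
      have h3 : (y :: t).filter (fun z => y < z) = t.filter (fun z => y < z) := by
        rw [List.filter_cons_of_neg (by simp)]
      rw [h2, h3, List.count_cons_self, List.replicate_succ, List.nil_append, List.cons_append]
      congr 1
      nth_rewrite 1 [iht]
      rw [h1, List.nil_append]
    · have h2 : (y :: t).filter (fun z => z < x) = [] := by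
        rw [List.filter_eq_nil_iff]; intro z hz
        rcases List.mem_cons.1 hz with rfl | hz'
        · simp; omega
        · have := hy z hz'; simp; omega
      have h4 : (y :: t).count x = 0 := by
        rw [List.count_eq_zero]; intro hx
        rcases List.mem_cons.1 hx with h' | hx'
        · omega
        · have := hy x hx'; omega
      have h5 : (y :: t).filter (fun z => x < z) = y :: t := by
        rw [List.filter_eq_self]; intro z hz
        rcases List.mem_cons.1 hz with rfl | hz'
        · simp; omega
        · have := hy z hz'; simp; omega
      rw [h2, h4, h5]; simp

lemma sorted_decomp2 {v : ℕ} {r : List ℕ} (h : r.Pairwise (· ≤ ·)) :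
    r = r.filter (fun z => z < v) ++ List.replicate (r.count v) v ++
        List.replicate (r.count (v+1)) (v+1) ++ r.filter (fun z => v+1 < z) := by
  have h1 := sorted_decomp (x := v) h
  have hR : (r.filter (fun z => v < z)).Pairwise (· ≤ ·) := h.filter _
  have h2 := sorted_decomp (x := v+1) hR
  have e1 : (r.filter (fun z => v < z)).filter (fun z => z < v+1) = [] := by
    rw [List.filter_eq_nil_iff]; intro z hz
    have := (List.mem_filter.1 hz).2; simp at this ⊢; omega
  have e2 : (r.filter (fun z => v < z)).count (v+1) = r.count (v+1) := by
    apply List.count_filter; simp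
  have e3 : (r.filter (fun z => v < z)).filter (fun z => v+1 < z) = r.filter (fun z => v+1 < z) := by
    rw [List.filter_filter]
    apply List.filter_congr
    intro a _
    by_cases hva : v + 1 < a <;> simp [hva] <;> omega
  have h2' : r.filter (fun z => v < z) = List.replicate (r.count (v+1)) (v+1) ++ r.filter (fun z => v+1 < z) := by
    nth_rewrite 1 [h2]
    rw [e1, e2, e3, List.nil_append]
  conv_lhs => rw [h1]
  rw [h2']
  simp [List.append_assoc]

/-- Block-form list. -/
def blk (P : List ℕ) (A B v : ℕ) (Q : List ℕ) : List ℕ :=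
  P ++ List.replicate A v ++ List.replicate B (v+1) ++ Q

variable {v A B : ℕ} {P Q : List ℕ}

lemma blk_length : (blk P A B v Q).length = P.length + A + B + Q.length := by
  simp [blk]; omega

lemma blk_of_sorted {r : List ℕ} (h : r.Pairwise (· ≤ ·)) :
    r = blk (r.filter (fun z => z < v)) (r.count v) (r.count (v+1)) v (r.filter (fun z => v+1 < z)) :=
  sorted_decomp2 h

lemma blk_getD_lo {p : ℕ} (hp : p < P.length) : (blk P A B v Q).getD p 0 = P.getD p 0 := by
  unfold blk
  rw [List.getD_append _ _ _ _ (by simp only [List.length_append, List.length_replicate]; omega),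
      List.getD_append _ _ _ _ (by simp only [List.length_append, List.length_replicate]; omega),
      List.getD_append _ _ _ _ hp]

lemma blk_getD_v {p : ℕ} (h1 : P.length ≤ p) (h2 : p < P.length + A) :
    (blk P A B v Q).getD p 0 = v := by
  unfold blk
  rw [List.getD_append _ _ _ _ (by simp only [List.length_append, List.length_replicate]; omega),
      List.getD_append _ _ _ _ (by simp only [List.length_append, List.length_replicate]; omega),
      List.getD_append_right _ _ _ _ h1,
      List.getD_eq_getElem _ _ (by simp only [List.length_append, List.length_replicate]; omega),
      List.getElem_replicate]

lemma blk_getD_v1 {p : ℕ} (h1 : P.length + A ≤ p) (h2 : p < P.length + A + B) :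
    (blk P A B v Q).getD p 0 = v + 1 := by
  unfold blk
  rw [List.getD_append _ _ _ _ (by simp only [List.length_append, List.length_replicate]; omega),
      List.getD_append_right _ _ _ _ (by simp only [List.length_append, List.length_replicate]; omega),
      List.getD_eq_getElem _ _ (by simp only [List.length_append, List.length_replicate]; omega),
      List.getElem_replicate]

lemma blk_getD_hi {p : ℕ} (h1 : P.length + A + B ≤ p) :
    (blk P A B v Q).getD p 0 = Q.getD (p - (P.length + A + B)) 0 := by
  unfold blk
  rw [List.getD_append_right _ _ _ _ (by simp only [List.length_append, List.length_replicate]; omega)]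
  simp only [List.length_append, List.length_replicate]


open List

section
variable {v A B : ℕ} {P Q : List ℕ}

lemma sorted_getD_mono {r : List ℕ} (h : r.Pairwise (· ≤ ·)) {p q : ℕ} (hpq : p ≤ q)
    (hq : q < r.length) : r.getD p 0 ≤ r.getD q 0 := by
  rw [List.getD_eq_getElem _ _ (lt_of_le_of_lt hpq hq), List.getD_eq_getElem _ _ hq]
  rcases eq_or_lt_of_le hpq with rfl | hlt
  · exact le_refl _
  · exact List.Pairwise.rel_get_of_lt h (by simpa using hlt)

lemma blk_sorted (hP : ∀ z ∈ P, z < v) (hQ : ∀ z ∈ Q, v+1 < z)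
    (hPs : P.Pairwise (· ≤ ·)) (hQs : Q.Pairwise (· ≤ ·)) : (blk P A B v Q).Pairwise (· ≤ ·) := by
  unfold blk
  rw [List.pairwise_append, List.pairwise_append, List.pairwise_append]
  refine ⟨⟨⟨hPs, ?_, ?_⟩, ?_, ?_⟩, hQs, ?_⟩
  · exact List.pairwise_replicate.2 (Or.inr (le_refl v))
  · intro a ha b hb
    rw [List.eq_of_mem_replicate hb]
    exact le_of_lt (hP a ha)
  · exact List.pairwise_replicate.2 (Or.inr (le_refl _))
  · intro a ha b hb
    rw [List.eq_of_mem_replicate hb]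
    rcases List.mem_append.1 ha with ha' | ha'
    · exact le_of_lt (Nat.lt_succ_of_lt (hP a ha'))
    · rw [List.eq_of_mem_replicate ha']; omega
  · intro a ha b hb
    have hbQ := hQ b hb
    rcases List.mem_append.1 ha with ha' | ha'
    · rcases List.mem_append.1 ha' with h'' | h''
      · have := hP a h''; omega
      · rw [List.eq_of_mem_replicate h'']; omega
    · rw [List.eq_of_mem_replicate ha']; omega

lemma count_eq_zero_of_lt (hP : ∀ z ∈ P, z < v) : P.count v = 0 :=
  List.count_eq_zero.2 (fun h => absurd (hP v h) (lt_irrefl v))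

lemma blk_count_v (hP : ∀ z ∈ P, z < v) (hQ : ∀ z ∈ Q, v+1 < z) :
    (blk P A B v Q).count v = A := by
  unfold blk
  rw [List.count_append, List.count_append, List.count_append]
  have h1 : P.count v = 0 := count_eq_zero_of_lt hP
  have h2 : Q.count v = 0 := List.count_eq_zero.2 (fun h => by have := hQ v h; omega)
  rw [h1, h2, List.count_replicate, List.count_replicate]
  simp

lemma blk_count_v1 (hP : ∀ z ∈ P, z < v) (hQ : ∀ z ∈ Q, v+1 < z) :
    (blk P A B v Q).count (v+1) = B := by
  unfold blk
  rw [List.count_append, List.count_append, List.count_append]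
  have h1 : P.count (v+1) = 0 := List.count_eq_zero.2 (fun h => by have := hP _ h; omega)
  have h2 : Q.count (v+1) = 0 := List.count_eq_zero.2 (fun h => by have := hQ _ h; omega)
  rw [h1, h2, List.count_replicate, List.count_replicate]
  simp

lemma blk_count_other {x : ℕ} (hx : x ≠ v) (hx1 : x ≠ v+1) :
    (blk P A B v Q).count x = P.count x + Q.count x := by
  unfold blk
  rw [List.count_append, List.count_append, List.count_append,
      List.count_replicate, List.count_replicate]
  simp only [beq_iff_eq]
  rw [if_neg (by omega), if_neg (by omega)]
  omega

lemma blk_filter_lt (hP : ∀ z ∈ P, z < v) (hQ : ∀ z ∈ Q, v+1 < z) :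
    (blk P A B v Q).filter (fun z => z < v) = P := by
  unfold blk
  rw [List.filter_append, List.filter_append, List.filter_append,
      List.filter_replicate, List.filter_replicate]
  rw [if_neg (by simp), if_neg (by simp)]
  have h1 : P.filter (fun z => z < v) = P := List.filter_eq_self.2 (fun a ha => by simpa using hP a ha)
  have h2 : Q.filter (fun z => z < v) = [] := by
    rw [List.filter_eq_nil_iff]; intro z hz; have := hQ z hz; simp; omega
  rw [h1, h2]; simp

lemma blk_filter_gt (hP : ∀ z ∈ P, z < v) (hQ : ∀ z ∈ Q, v+1 < z) :
    (blk P A B v Q).filter (fun z => v+1 < z) = Q := by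
  unfold blk
  rw [List.filter_append, List.filter_append, List.filter_append,
      List.filter_replicate, List.filter_replicate]
  rw [if_neg (by simp), if_neg (by simp)]
  have h1 : P.filter (fun z => v+1 < z) = [] := by
    rw [List.filter_eq_nil_iff]; intro z hz; have := hP z hz; simp; omega
  have h2 : Q.filter (fun z => v+1 < z) = Q := List.filter_eq_self.2 (fun a ha => by simpa using hQ a ha)
  rw [h1, h2]; simp

lemma blk_region_of_v (hP : ∀ z ∈ P, z < v) (hQ : ∀ z ∈ Q, v+1 < z) {p : ℕ}
    (hp : p < (blk P A B v Q).length) (hval : (blk P A B v Q).getD p 0 = v) :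
    P.length ≤ p ∧ p < P.length + A := by
  have hlen : (blk P A B v Q).length = P.length + A + B + Q.length := by simp [blk]; omega
  rcases lt_or_ge p P.length with h1 | h1
  · exfalso
    have : (blk P A B v Q).getD p 0 = P.getD p 0 := by
      unfold blk
      rw [List.getD_append _ _ _ _ (by simp only [List.length_append, List.length_replicate]; omega),
          List.getD_append _ _ _ _ (by simp only [List.length_append, List.length_replicate]; omega),
          List.getD_append _ _ _ _ h1]
    rw [this, List.getD_eq_getElem _ _ h1] at hval
    have := hP _ (List.getElem_mem h1)
    omega
  refine ⟨h1, ?_⟩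
  by_contra hcon
  push_neg at hcon
  rcases lt_or_ge p (P.length + A + B) with h2 | h2
  · have : (blk P A B v Q).getD p 0 = v + 1 := by
      unfold blk
      rw [List.getD_append _ _ _ _ (by simp only [List.length_append, List.length_replicate]; omega),
          List.getD_append_right _ _ _ _ (by simp only [List.length_append, List.length_replicate]; omega),
          List.getD_eq_getElem _ _ (by simp only [List.length_append, List.length_replicate]; omega),
          List.getElem_replicate]
    omega
  · have hq : p - (P.length + A + B) < Q.length := by omega
    have : (blk P A B v Q).getD p 0 = Q.getD (p - (P.length + A + B)) 0 := by
      unfold blk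
      rw [List.getD_append_right _ _ _ _ (by simp only [List.length_append, List.length_replicate]; omega)]
      simp only [List.length_append, List.length_replicate]
    rw [this, List.getD_eq_getElem _ _ hq] at hval
    have := hQ _ (List.getElem_mem hq)
    omega

lemma blk_region_of_v1 (hP : ∀ z ∈ P, z < v) (hQ : ∀ z ∈ Q, v+1 < z) {p : ℕ}
    (hp : p < (blk P A B v Q).length) (hval : (blk P A B v Q).getD p 0 = v+1) :
    P.length + A ≤ p ∧ p < P.length + A + B := by
  have hlen : (blk P A B v Q).length = P.length + A + B + Q.length := by simp [blk]; omega
  rcases lt_or_ge p P.length with h1 | h1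
  · exfalso
    have : (blk P A B v Q).getD p 0 = P.getD p 0 := by
      unfold blk
      rw [List.getD_append _ _ _ _ (by simp only [List.length_append, List.length_replicate]; omega),
          List.getD_append _ _ _ _ (by simp only [List.length_append, List.length_replicate]; omega),
          List.getD_append _ _ _ _ h1]
    rw [this, List.getD_eq_getElem _ _ h1] at hval
    have := hP _ (List.getElem_mem h1)
    omega
  rcases lt_or_ge p (P.length + A) with h2 | h2
  · exfalso
    have : (blk P A B v Q).getD p 0 = v := by
      unfold blk
      rw [List.getD_append _ _ _ _ (by simp only [List.length_append, List.length_replicate]; omega),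
          List.getD_append _ _ _ _ (by simp only [List.length_append, List.length_replicate]; omega),
          List.getD_append_right _ _ _ _ h1,
          List.getD_eq_getElem _ _ (by simp only [List.length_append, List.length_replicate]; omega),
          List.getElem_replicate]
    omega
  refine ⟨h2, ?_⟩
  by_contra hcon
  push_neg at hcon
  have hq : p - (P.length + A + B) < Q.length := by omega
  have : (blk P A B v Q).getD p 0 = Q.getD (p - (P.length + A + B)) 0 := by
    unfold blk
    rw [List.getD_append_right _ _ _ _ (by simp only [List.length_append, List.length_replicate]; omega)]
    simp only [List.length_append, List.length_replicate]
  rw [this, List.getD_eq_getElem _ _ hq] at hval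
  have := hQ _ (List.getElem_mem hq)
  omega

end

end BKaux
namespace BKcore
open BKaux

variable {n : ℕ}

def Fset (T : SkewTab n) (v i : ℕ) : Finset ℕ :=
  (Finset.range (min (T.outer i) (T.outer (i+1)))).filter
    (fun j => T.inner i ≤ j ∧ T.inner (i+1) ≤ j ∧ T.entry i j = v ∧ T.entry (i+1) j = v+1)

def fv (T : SkewTab n) (v i : ℕ) : ℕ := (Fset T v i).card

def gv (T : SkewTab n) (v : ℕ) : ℕ → ℕ
  | 0 => 0
  | (i+1) => fv T v i

/-- number of entries `< v` in row `i`. -/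
def cv (T : SkewTab n) (v i : ℕ) : ℕ := ((T.row i).filter (fun z => z < v)).length
def av (T : SkewTab n) (v i : ℕ) : ℕ := (T.row i).count v
def bv (T : SkewTab n) (v i : ℕ) : ℕ := (T.row i).count (v+1)

lemma mem_Fset_iff {T : SkewTab n} {v i j : ℕ} :
    j ∈ Fset T v i ↔ T.inner i ≤ j ∧ j < T.outer i ∧ T.inner (i+1) ≤ j ∧ j < T.outer (i+1) ∧
      T.entry i j = v ∧ T.entry (i+1) j = v+1 := by
  simp only [Fset, Finset.mem_filter, Finset.mem_range, lt_min_iff]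
  tauto

lemma outer_eq (T : SkewTab n) (i : ℕ) : T.outer i = T.inner i + (T.row i).length := rfl

lemma entry_eq (T : SkewTab n) (i j : ℕ) : T.entry i j = (T.row i).getD (j - T.inner i) 0 := rfl

lemma row_blk {T : SkewTab n} (hT : T.IsSSYT) (v i : ℕ) :
    T.row i = blk ((T.row i).filter (fun z => z < v)) (av T v i) (bv T v i) v
      ((T.row i).filter (fun z => v+1 < z)) :=
  blk_of_sorted (hT.2.2.1 i)

lemma filter_lt_prop {r : List ℕ} {v : ℕ} : ∀ z ∈ r.filter (fun z => z < v), z < v :=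
  fun z hz => by simpa using (List.mem_filter.1 hz).2

lemma filter_gt_prop {r : List ℕ} {v : ℕ} : ∀ z ∈ r.filter (fun z => v+1 < z), v+1 < z :=
  fun z hz => by simpa using (List.mem_filter.1 hz).2

lemma filter_lt_len {T : SkewTab n} (hT : T.IsSSYT) (v i : ℕ) :
    cv T v i + av T v i + bv T v i ≤ (T.row i).length := by
  conv_rhs => rw [row_blk hT v i]
  rw [blk_length]
  unfold cv
  omega

/-- value `v` at a position forces the position to lie in the `v`-region. -/
lemma region_of_v {T : SkewTab n} (hT : T.IsSSYT) {v i j : ℕ} (h1 : T.inner i ≤ j)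
    (h2 : j < T.outer i) (hval : T.entry i j = v) :
    cv T v i ≤ j - T.inner i ∧ j - T.inner i < cv T v i + av T v i := by
  have hp : j - T.inner i < (T.row i).length := by
    have := outer_eq T i; omega
  rw [entry_eq] at hval
  rw [row_blk hT v i] at hval hp
  exact blk_region_of_v filter_lt_prop filter_gt_prop hp hval

lemma region_of_v1 {T : SkewTab n} (hT : T.IsSSYT) {v i j : ℕ} (h1 : T.inner i ≤ j)
    (h2 : j < T.outer i) (hval : T.entry i j = v+1) :
    cv T v i + av T v i ≤ j - T.inner i ∧ j - T.inner i < cv T v i + av T v i + bv T v i := by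
  have hp : j - T.inner i < (T.row i).length := by
    have := outer_eq T i; omega
  rw [entry_eq] at hval
  rw [row_blk hT v i] at hval hp
  exact blk_region_of_v1 filter_lt_prop filter_gt_prop hp hval

lemma entry_of_v_region {T : SkewTab n} (hT : T.IsSSYT) {v i q : ℕ} (h1 : cv T v i ≤ q)
    (h2 : q < cv T v i + av T v i) : T.entry i (T.inner i + q) = v := by
  rw [entry_eq, Nat.add_sub_cancel_left, row_blk hT v i]
  exact blk_getD_v h1 h2

lemma entry_of_v1_region {T : SkewTab n} (hT : T.IsSSYT) {v i q : ℕ}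
    (h1 : cv T v i + av T v i ≤ q) (h2 : q < cv T v i + av T v i + bv T v i) :
    T.entry i (T.inner i + q) = v + 1 := by
  rw [entry_eq, Nat.add_sub_cancel_left, row_blk hT v i]
  exact blk_getD_v1 h1 h2

end BKcore
namespace BKcore
open BKaux

variable {n : ℕ}

lemma inner_anti {T : SkewTab n} (hT : T.IsSSYT) (i : ℕ) : T.inner (i+1) ≤ T.inner i :=
  hT.1.1 i (i+1) (Nat.le_succ i)

lemma outer_anti {T : SkewTab n} (hT : T.IsSSYT) (i : ℕ) : T.outer (i+1) ≤ T.outer i :=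
  (hT.2.1).1 i (i+1) (Nat.le_succ i)

lemma entry_mono {T : SkewTab n} (hT : T.IsSSYT) {i j j' : ℕ} (h1 : T.inner i ≤ j)
    (hjj : j ≤ j') (h2 : j' < T.outer i) : T.entry i j ≤ T.entry i j' := by
  rw [entry_eq, entry_eq]
  apply sorted_getD_mono (hT.2.2.1 i)
  · omega
  · have := outer_eq T i; omega

lemma Fprefix {T : SkewTab n} (hT : T.IsSSYT) {v i j : ℕ} (hj : j ∈ Fset T v i) :
    j - T.inner i < cv T v i + fv T v i := by
  obtain ⟨h1, h2, h3, h4, h5, h6⟩ := mem_Fset_iff.1 hj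
  obtain ⟨hc1, hc2⟩ := region_of_v hT h1 h2 h5
  set p := j - T.inner i with hp
  by_contra hcon
  push_neg at hcon
  have himg : (Finset.Icc (cv T v i) p).image (fun q => T.inner i + q) ⊆ Fset T v i := by
    intro j' hj'
    obtain ⟨q, hq, rfl⟩ := Finset.mem_image.1 hj'
    obtain ⟨hq1, hq2⟩ := Finset.mem_Icc.1 hq
    have hjle : T.inner i + q ≤ j := by omega
    have hlt : T.inner i + q < T.outer i := by omega
    have hval : T.entry i (T.inner i + q) = v := entry_of_v_region hT hq1 (by omega)
    have hsh1 : T.inner (i+1) ≤ T.inner i + q :=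
      le_trans (inner_anti hT i) (Nat.le_add_right _ _)
    have hsh2 : T.inner i + q < T.outer (i+1) := lt_of_le_of_lt hjle h4
    have hstrict := hT.2.2.2.2 i (T.inner i + q) (Nat.le_add_right _ _) hlt hsh1 hsh2
    have hmono : T.entry (i+1) (T.inner i + q) ≤ T.entry (i+1) j :=
      entry_mono hT hsh1 hjle h4
    have hval2 : T.entry (i+1) (T.inner i + q) = v + 1 := by omega
    exact mem_Fset_iff.2 ⟨Nat.le_add_right _ _, hlt, hsh1, hsh2, hval, hval2⟩
  have hcard := Finset.card_le_card himg
  rw [Finset.card_image_of_injective _ (fun x y h => by simpa using h),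
      Nat.card_Icc] at hcard
  unfold fv at hcon
  omega

lemma Fsuffix {T : SkewTab n} (hT : T.IsSSYT) {v i j : ℕ} (hj : j ∈ Fset T v i) :
    cv T v (i+1) + av T v (i+1) + bv T v (i+1) ≤ (j - T.inner (i+1)) + fv T v i := by
  obtain ⟨h1, h2, h3, h4, h5, h6⟩ := mem_Fset_iff.1 hj
  obtain ⟨hc1, hc2⟩ := region_of_v1 hT h3 h4 h6
  set p := j - T.inner (i+1) with hp
  by_contra hcon
  push_neg at hcon
  have himg : (Finset.Icc p (cv T v (i+1) + av T v (i+1) + bv T v (i+1) - 1)).image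
      (fun q => T.inner (i+1) + q) ⊆ Fset T v i := by
    intro j' hj'
    obtain ⟨q, hq, rfl⟩ := Finset.mem_image.1 hj'
    obtain ⟨hq1, hq2⟩ := Finset.mem_Icc.1 hq
    have hjle : j ≤ T.inner (i+1) + q := by omega
    have hlt : T.inner (i+1) + q < T.outer (i+1) := by
      have := filter_lt_len hT v (i+1)
      have := outer_eq T (i+1)
      omega
    have hval2 : T.entry (i+1) (T.inner (i+1) + q) = v + 1 :=
      entry_of_v1_region hT (by omega) (by omega)
    have hsh1 : T.inner i ≤ T.inner (i+1) + q := le_trans h1 hjle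
    have hsh2 : T.inner (i+1) + q < T.outer i := lt_of_lt_of_le hlt (outer_anti hT i)
    have hstrict := hT.2.2.2.2 i (T.inner (i+1) + q) hsh1 hsh2 (Nat.le_add_right _ _) hlt
    have hmono : T.entry i j ≤ T.entry i (T.inner (i+1) + q) :=
      entry_mono hT h1 hjle hsh2
    have hval : T.entry i (T.inner (i+1) + q) = v := by omega
    exact mem_Fset_iff.2 ⟨hsh1, hsh2, Nat.le_add_right _ _, hlt, hval, hval2⟩
  have hcard := Finset.card_le_card himg
  rw [Finset.card_image_of_injective _ (fun x y h => by simpa using h),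
      Nat.card_Icc] at hcard
  unfold fv at hcon
  omega

lemma fv_le_av {T : SkewTab n} (hT : T.IsSSYT) (v i : ℕ) : fv T v i ≤ av T v i := by
  have h : Fset T v i ⊆ (Finset.Ico (cv T v i) (cv T v i + av T v i)).image
      (fun q => T.inner i + q) := by
    intro j hj
    obtain ⟨h1, h2, h3, h4, h5, h6⟩ := mem_Fset_iff.1 hj
    obtain ⟨hc1, hc2⟩ := region_of_v hT h1 h2 h5
    refine Finset.mem_image.2 ⟨j - T.inner i, Finset.mem_Ico.2 ⟨hc1, hc2⟩, by omega⟩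
  have := Finset.card_le_card h
  rw [Finset.card_image_of_injective _ (fun x y h => by simpa using h),
      Nat.card_Ico] at this
  unfold fv
  omega

lemma fv_le_bv_succ {T : SkewTab n} (hT : T.IsSSYT) (v i : ℕ) : fv T v i ≤ bv T v (i+1) := by
  have h : Fset T v i ⊆ (Finset.Ico (cv T v (i+1) + av T v (i+1))
      (cv T v (i+1) + av T v (i+1) + bv T v (i+1))).image (fun q => T.inner (i+1) + q) := by
    intro j hj
    obtain ⟨h1, h2, h3, h4, h5, h6⟩ := mem_Fset_iff.1 hj
    obtain ⟨hc1, hc2⟩ := region_of_v1 hT h3 h4 h6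
    refine Finset.mem_image.2 ⟨j - T.inner (i+1), Finset.mem_Ico.2 ⟨hc1, hc2⟩, by omega⟩
  have := Finset.card_le_card h
  rw [Finset.card_image_of_injective _ (fun x y h => by simpa using h),
      Nat.card_Ico] at this
  unfold fv
  omega

lemma gv_le_bv {T : SkewTab n} (hT : T.IsSSYT) (v i : ℕ) : gv T v i ≤ bv T v i := by
  cases i with
  | zero => exact Nat.zero_le _
  | succ i => exact fv_le_bv_succ hT v i

end BKcore
namespace BKcore
open BKaux

variable {n : ℕ}

def bkA (T : SkewTab n) (v i : ℕ) : ℕ := fv T v i + (bv T v i - gv T v i)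
def bkB (T : SkewTab n) (v i : ℕ) : ℕ := gv T v i + (av T v i - fv T v i)

/-- The Bender–Knuth involution at value `v`. -/
def bk (T : SkewTab n) (v : ℕ) : SkewTab n where
  inner := T.inner
  row := fun i => blk ((T.row i).filter (fun z => z < v)) (bkA T v i) (bkB T v i) v
    ((T.row i).filter (fun z => v+1 < z))

lemma bk_inner (T : SkewTab n) (v : ℕ) : (bk T v).inner = T.inner := rfl

lemma bk_row (T : SkewTab n) (v i : ℕ) :
    (bk T v).row i = blk ((T.row i).filter (fun z => z < v)) (bkA T v i) (bkB T v i) v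
      ((T.row i).filter (fun z => v+1 < z)) := rfl

lemma bk_entry_eq (T : SkewTab n) (v i j : ℕ) :
    (bk T v).entry i j = (blk ((T.row i).filter (fun z => z < v)) (bkA T v i) (bkB T v i) v
      ((T.row i).filter (fun z => v+1 < z))).getD (j - T.inner i) 0 := rfl

lemma bkA_add_bkB {T : SkewTab n} (hT : T.IsSSYT) (v i : ℕ) :
    bkA T v i + bkB T v i = av T v i + bv T v i := by
  have h1 := fv_le_av hT v i
  have h2 := gv_le_bv hT v i
  unfold bkA bkB
  omega

lemma bk_row_length {T : SkewTab n} (hT : T.IsSSYT) (v i : ℕ) :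
    ((bk T v).row i).length = (T.row i).length := by
  rw [bk_row, blk_length]
  conv_rhs => rw [row_blk hT v i]
  rw [blk_length]
  have := bkA_add_bkB hT v i
  omega

lemma bk_outer {T : SkewTab n} (hT : T.IsSSYT) (v : ℕ) : (bk T v).outer = T.outer := by
  funext i
  show (bk T v).inner i + ((bk T v).row i).length = _
  rw [bk_inner, bk_row_length hT, outer_eq]

-- Entry lemmas.  `j` is assumed to lie in the shape of row `i`.
lemma bk_entry_lo {T : SkewTab n} (hT : T.IsSSYT) {v i j : ℕ} (h1 : T.inner i ≤ j)
    (h2 : j < T.outer i) (hval : T.entry i j < v) : (bk T v).entry i j = T.entry i j := by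
  have hp : j - T.inner i < (T.row i).length := by have := outer_eq T i; omega
  -- position must be in the low region
  have hreg : j - T.inner i < cv T v i := by
    by_contra hcon
    push_neg at hcon
    rcases lt_or_ge (j - T.inner i) (cv T v i + av T v i) with h | h
    · have := entry_of_v_region hT hcon h
      rw [(by omega : T.inner i + (j - T.inner i) = j)] at this
      omega
    · rcases lt_or_ge (j - T.inner i) (cv T v i + av T v i + bv T v i) with h' | h'
      · have := entry_of_v1_region hT h h'
        rw [(by omega : T.inner i + (j - T.inner i) = j)] at this
        omega
      · -- high region : value > v+1
        have : T.entry i j = ((T.row i).filter (fun z => v+1 < z)).getD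
            (j - T.inner i - (cv T v i + av T v i + bv T v i)) 0 := by
          rw [entry_eq]
          conv_lhs => rw [row_blk hT v i]
          exact blk_getD_hi h'
        have hq : j - T.inner i - (cv T v i + av T v i + bv T v i) <
            ((T.row i).filter (fun z => v+1 < z)).length := by
          have hlen : (T.row i).length = cv T v i + av T v i + bv T v i +
              ((T.row i).filter (fun z => v+1 < z)).length := by
            conv_lhs => rw [row_blk hT v i]
            rw [blk_length]
            unfold cv
            omega
          omega
        rw [this, List.getD_eq_getElem _ _ hq] at hval
        have := filter_gt_prop _ (List.getElem_mem hq)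
        omega
  rw [bk_entry_eq, blk_getD_lo hreg, entry_eq]
  conv_rhs => rw [row_blk hT v i]
  rw [blk_getD_lo hreg]

lemma bk_entry_hi {T : SkewTab n} (hT : T.IsSSYT) {v i j : ℕ} (h1 : T.inner i ≤ j)
    (h2 : j < T.outer i) (hval : v + 1 < T.entry i j) : (bk T v).entry i j = T.entry i j := by
  have hp : j - T.inner i < (T.row i).length := by have := outer_eq T i; omega
  have hreg : cv T v i + av T v i + bv T v i ≤ j - T.inner i := by
    by_contra hcon
    push_neg at hcon
    rcases lt_or_ge (j - T.inner i) (cv T v i) with h | h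
    · have : T.entry i j = ((T.row i).filter (fun z => z < v)).getD (j - T.inner i) 0 := by
        rw [entry_eq]
        conv_lhs => rw [row_blk hT v i]
        exact blk_getD_lo h
      have hq : j - T.inner i < ((T.row i).filter (fun z => z < v)).length := h
      rw [this, List.getD_eq_getElem _ _ hq] at hval
      have := filter_lt_prop _ (List.getElem_mem hq)
      omega
    · rcases lt_or_ge (j - T.inner i) (cv T v i + av T v i) with h' | h'
      · have := entry_of_v_region hT h h'
        rw [(by omega : T.inner i + (j - T.inner i) = j)] at this
        omega
      · have := entry_of_v1_region hT h' hcon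
        rw [(by omega : T.inner i + (j - T.inner i) = j)] at this
        omega
  have hAB := bkA_add_bkB hT v i
  have hcv : cv T v i = ((T.row i).filter (fun z => z < v)).length := rfl
  rw [bk_entry_eq, entry_eq]
  rw [blk_getD_hi (by omega)]
  conv_rhs => rw [row_blk hT v i]
  rw [blk_getD_hi (by omega)]
  congr 1
  omega

lemma bk_entry_mid {T : SkewTab n} (hT : T.IsSSYT) {v i j : ℕ} (h1 : T.inner i ≤ j)
    (h2 : j < T.outer i) (hval : T.entry i j = v ∨ T.entry i j = v + 1) :
    (bk T v).entry i j = v ∨ (bk T v).entry i j = v + 1 := by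
  have hp : j - T.inner i < (T.row i).length := by have := outer_eq T i; omega
  have hreg : cv T v i ≤ j - T.inner i ∧ j - T.inner i < cv T v i + av T v i + bv T v i := by
    rcases hval with h | h
    · have := region_of_v hT h1 h2 h
      omega
    · have := region_of_v1 hT h1 h2 h
      omega
  have hAB := bkA_add_bkB hT v i
  have hcv : cv T v i = ((T.row i).filter (fun z => z < v)).length := rfl
  rcases lt_or_ge (j - T.inner i) (cv T v i + bkA T v i) with h | h
  · left; rw [bk_entry_eq]; refine blk_getD_v ?_ ?_ <;> omega
  · right; rw [bk_entry_eq]; refine blk_getD_v1 ?_ ?_ <;> omega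

lemma bk_entry_mid_rev {T : SkewTab n} (hT : T.IsSSYT) {v i j : ℕ} (h1 : T.inner i ≤ j)
    (h2 : j < T.outer i) (hval : (bk T v).entry i j = v ∨ (bk T v).entry i j = v + 1) :
    T.entry i j = v ∨ T.entry i j = v + 1 := by
  have hp : j - T.inner i < (T.row i).length := by have := outer_eq T i; omega
  have hAB := bkA_add_bkB hT v i
  have hcv : cv T v i = ((T.row i).filter (fun z => z < v)).length := rfl
  have hreg : cv T v i ≤ j - T.inner i ∧ j - T.inner i < cv T v i + av T v i + bv T v i := by
    rw [bk_entry_eq] at hval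
    have hp' : j - T.inner i < (blk ((T.row i).filter (fun z => z < v)) (bkA T v i) (bkB T v i) v
        ((T.row i).filter (fun z => v+1 < z))).length := by
      rw [← bk_row, bk_row_length hT]; exact hp
    rcases hval with h | h
    · have := blk_region_of_v filter_lt_prop filter_gt_prop hp' h
      omega
    · have := blk_region_of_v1 filter_lt_prop filter_gt_prop hp' h
      omega
  rw [entry_eq]
  have hrow := row_blk hT v i
  rcases lt_or_ge (j - T.inner i) (cv T v i + av T v i) with h | h
  · left; rw [hrow]; refine blk_getD_v ?_ ?_ <;> omega
  · right; rw [hrow]; refine blk_getD_v1 ?_ ?_ <;> omega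

lemma bk_entry_fixed_top {T : SkewTab n} (hT : T.IsSSYT) {v i j : ℕ} (hj : j ∈ Fset T v i) :
    (bk T v).entry i j = v := by
  obtain ⟨h1, h2, h3, h4, h5, h6⟩ := mem_Fset_iff.1 hj
  have hpre := Fprefix hT hj
  have hreg := region_of_v hT h1 h2 h5
  have hcv : cv T v i = ((T.row i).filter (fun z => z < v)).length := rfl
  have hfvA : fv T v i ≤ bkA T v i := Nat.le_add_right _ _
  rw [bk_entry_eq]
  refine blk_getD_v ?_ ?_ <;> omega

lemma bk_entry_fixed_bot {T : SkewTab n} (hT : T.IsSSYT) {v i j : ℕ} (hj : j ∈ Fset T v i) :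
    (bk T v).entry (i+1) j = v + 1 := by
  obtain ⟨h1, h2, h3, h4, h5, h6⟩ := mem_Fset_iff.1 hj
  have hsuf := Fsuffix hT hj
  have hreg := region_of_v1 hT h3 h4 h6
  have hfa := fv_le_av hT v (i+1)
  have hfb := fv_le_bv_succ hT v i
  have hcv : cv T v (i+1) = ((T.row (i+1)).filter (fun z => z < v)).length := rfl
  have hgv : gv T v (i+1) = fv T v i := rfl
  have hbkA : bkA T v (i+1) = fv T v (i+1) + (bv T v (i+1) - gv T v (i+1)) := rfl
  have hAB := bkA_add_bkB hT v (i+1)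
  rw [bk_entry_eq]
  refine blk_getD_v1 ?_ ?_ <;> omega

end BKcore
namespace BKcore
open BKaux

variable {n : ℕ}

lemma bk_row_sorted {T : SkewTab n} (hT : T.IsSSYT) (v i : ℕ) :
    ((bk T v).row i).Pairwise (· ≤ ·) := by
  rw [bk_row]
  exact blk_sorted filter_lt_prop filter_gt_prop ((hT.2.2.1 i).filter _) ((hT.2.2.1 i).filter _)

lemma bk_strict {T : SkewTab n} (hT : T.IsSSYT) (v : ℕ) {i j : ℕ}
    (h1 : T.inner i ≤ j) (h2 : j < T.outer i) (h3 : T.inner (i+1) ≤ j) (h4 : j < T.outer (i+1)) :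
    (bk T v).entry i j < (bk T v).entry (i+1) j := by
  have hstrict := hT.2.2.2.2 i j h1 h2 h3 h4
  rcases lt_trichotomy (T.entry i j) v with hlo | hmid | hhi
  · rw [bk_entry_lo hT h1 h2 hlo]
    rcases lt_trichotomy (T.entry (i+1) j) v with glo | gmid | ghi
    · rw [bk_entry_lo hT h3 h4 glo]; exact hstrict
    · have := bk_entry_mid hT h3 h4 (Or.inl gmid)
      omega
    · rcases Nat.lt_or_ge (T.entry (i+1) j) (v+1) with g1 | g1
      · omega
      · rcases Nat.eq_or_lt_of_le g1 with g2 | g2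
        · have := bk_entry_mid hT h3 h4 (Or.inr g2.symm)
          omega
        · rw [bk_entry_hi hT h3 h4 g2]
          omega
  · -- entry i j = v
    have htop := bk_entry_mid hT h1 h2 (Or.inl hmid)
    rcases Nat.lt_or_ge (v+1) (T.entry (i+1) j) with g2 | g2
    · rw [bk_entry_hi hT h3 h4 g2]
      omega
    · -- entry (i+1) j = v+1, fixed pair
      have hbot : T.entry (i+1) j = v + 1 := by omega
      have hjF : j ∈ Fset T v i := mem_Fset_iff.2 ⟨h1, h2, h3, h4, hmid, hbot⟩
      rw [bk_entry_fixed_top hT hjF, bk_entry_fixed_bot hT hjF]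
      omega
  · rcases Nat.eq_or_lt_of_le hhi with h' | h'
    · -- entry i j = v+1
      have htop := bk_entry_mid hT h1 h2 (Or.inr h'.symm)
      have g2 : v + 1 < T.entry (i+1) j := by omega
      rw [bk_entry_hi hT h3 h4 g2]
      omega
    · rw [bk_entry_hi hT h1 h2 h', bk_entry_hi hT h3 h4 (by omega)]
      exact hstrict

lemma bk_isSSYT {T : SkewTab n} (hT : T.IsSSYT) {v : ℕ} (hv1 : 1 ≤ v) (hvn : v + 1 ≤ n) :
    (bk T v).IsSSYT := by
  refine ⟨?_, ?_, ?_, ?_, ?_⟩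
  · rw [bk_inner]; exact hT.1
  · rw [bk_outer hT]; exact hT.2.1
  · exact fun i => bk_row_sorted hT v i
  · intro i x hx
    rw [bk_row] at hx
    unfold blk at hx
    rcases List.mem_append.1 hx with hx' | hx'
    · rcases List.mem_append.1 hx' with hx'' | hx''
      · rcases List.mem_append.1 hx'' with h | h
        · exact hT.2.2.2.1 i x (List.mem_of_mem_filter h)
        · rw [List.eq_of_mem_replicate h]; omega
      · rw [List.eq_of_mem_replicate hx'']; omega
    · exact hT.2.2.2.1 i x (List.mem_of_mem_filter hx')
  · intro i j hj1 hj2 hj3 hj4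
    rw [bk_inner] at hj1 hj3
    rw [bk_outer hT] at hj2 hj4
    exact bk_strict hT v hj1 hj2 hj3 hj4

lemma bk_count_v {T : SkewTab n} (v i : ℕ) : ((bk T v).row i).count v = bkA T v i := by
  rw [bk_row]; exact blk_count_v filter_lt_prop filter_gt_prop

lemma bk_count_v1 {T : SkewTab n} (v i : ℕ) : ((bk T v).row i).count (v+1) = bkB T v i := by
  rw [bk_row]; exact blk_count_v1 filter_lt_prop filter_gt_prop

lemma bk_count_other {T : SkewTab n} (hT : T.IsSSYT) {v : ℕ} (i : ℕ) {x : ℕ} (hx : x ≠ v)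
    (hx1 : x ≠ v+1) : ((bk T v).row i).count x = (T.row i).count x := by
  rw [bk_row, blk_count_other hx hx1]
  conv_rhs => rw [row_blk hT v i]
  rw [blk_count_other hx hx1]

lemma Fset_bk {T : SkewTab n} (hT : T.IsSSYT) (v i : ℕ) : Fset (bk T v) v i = Fset T v i := by
  ext j
  rw [mem_Fset_iff, mem_Fset_iff, bk_inner, bk_outer hT]
  constructor
  · rintro ⟨h1, h2, h3, h4, h5, h6⟩
    have e1 := bk_entry_mid_rev hT h1 h2 (Or.inl h5)
    have e2 := bk_entry_mid_rev hT h3 h4 (Or.inr h6)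
    have hstrict := hT.2.2.2.2 i j h1 h2 h3 h4
    exact ⟨h1, h2, h3, h4, by omega, by omega⟩
  · rintro ⟨h1, h2, h3, h4, h5, h6⟩
    have hjF : j ∈ Fset T v i := mem_Fset_iff.2 ⟨h1, h2, h3, h4, h5, h6⟩
    exact ⟨h1, h2, h3, h4, bk_entry_fixed_top hT hjF, bk_entry_fixed_bot hT hjF⟩

lemma fv_bk {T : SkewTab n} (hT : T.IsSSYT) (v i : ℕ) : fv (bk T v) v i = fv T v i := by
  unfold fv; rw [Fset_bk hT]

lemma gv_bk {T : SkewTab n} (hT : T.IsSSYT) (v i : ℕ) : gv (bk T v) v i = gv T v i := by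
  cases i with
  | zero => rfl
  | succ i => show fv (bk T v) v i = fv T v i; exact fv_bk hT v i

lemma bkA_bk {T : SkewTab n} (hT : T.IsSSYT) (v i : ℕ) : bkA (bk T v) v i = av T v i := by
  have h1 := fv_le_av hT v i
  have h2 := gv_le_bv hT v i
  show fv (bk T v) v i + (bv (bk T v) v i - gv (bk T v) v i) = _
  unfold bv
  rw [fv_bk hT, gv_bk hT, bk_count_v1]
  show fv T v i + (gv T v i + (av T v i - fv T v i) - gv T v i) = _
  omega

lemma bkB_bk {T : SkewTab n} (hT : T.IsSSYT) (v i : ℕ) : bkB (bk T v) v i = bv T v i := by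
  have h1 := fv_le_av hT v i
  have h2 := gv_le_bv hT v i
  show gv (bk T v) v i + (av (bk T v) v i - fv (bk T v) v i) = _
  unfold av
  rw [fv_bk hT, gv_bk hT, bk_count_v]
  show gv T v i + (fv T v i + (bv T v i - gv T v i) - fv T v i) = _
  omega

lemma bk_involution {T : SkewTab n} (hT : T.IsSSYT) (v : ℕ) : bk (bk T v) v = T := by
  obtain ⟨inner, row⟩ := T
  unfold bk
  simp only [SkewTab.mk.injEq]
  refine ⟨trivial, ?_⟩
  funext i
  set T : SkewTab n := ⟨inner, row⟩ with hTdef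
  show blk (((bk T v).row i).filter (fun z => z < v)) (bkA (bk T v) v i) (bkB (bk T v) v i) v
      (((bk T v).row i).filter (fun z => v+1 < z)) = row i
  rw [bkA_bk hT, bkB_bk hT]
  have hflt : ((bk T v).row i).filter (fun z => z < v) = (T.row i).filter (fun z => z < v) := by
    rw [bk_row, blk_filter_lt filter_lt_prop filter_gt_prop]
  have hfgt : ((bk T v).row i).filter (fun z => v+1 < z) = (T.row i).filter (fun z => v+1 < z) := by
    rw [bk_row, blk_filter_gt filter_lt_prop filter_gt_prop]
  rw [hflt, hfgt]
  exact (row_blk hT v i).symm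

end BKcore
namespace BKcore
open BKaux

variable {n : ℕ}

lemma rows_empty {T : SkewTab n} {lam mu : ℕ → ℕ} (hTm : T ∈ Tabs n lam mu)
    (hl : IsPartition lam) : ∃ N, ∀ i, N ≤ i → T.row i = [] := by
  obtain ⟨N, hN⟩ := hl.2
  refine ⟨N, fun i hi => ?_⟩
  have ho : T.outer i = 0 := by rw [hTm.2.2]; exact hN i hi
  rw [outer_eq] at ho
  exact List.eq_nil_of_length_eq_zero (by omega)

lemma wt_eq_sum {T : SkewTab n} {N : ℕ} (h : ∀ i, N ≤ i → T.row i = []) (k : ℕ) :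
    T.wt k = ∑ i ∈ Finset.range N, (T.row i).count k := by
  unfold SkewTab.wt
  apply finsum_eq_sum_of_support_subset
  intro i hi
  simp only [Function.mem_support] at hi
  simp only [Finset.coe_range, Set.mem_Iio]
  by_contra hcon
  push_neg at hcon
  rw [h i hcon] at hi
  simp at hi

lemma bk_rows_empty {T : SkewTab n} (hT : T.IsSSYT) {N : ℕ} (h : ∀ i, N ≤ i → T.row i = [])
    (v : ℕ) : ∀ i, N ≤ i → (bk T v).row i = [] := by
  intro i hi
  have hlen := bk_row_length hT v i
  rw [h i hi] at hlen
  exact List.eq_nil_of_length_eq_zero (by simpa using hlen)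

lemma sum_gv {T : SkewTab n} (hT : T.IsSSYT) {N : ℕ} (h : ∀ i, N ≤ i → T.row i = []) (v : ℕ) :
    ∑ i ∈ Finset.range (N+1), gv T v i = ∑ i ∈ Finset.range (N+1), fv T v i := by
  rw [Finset.sum_range_succ' (fun i => gv T v i), Finset.sum_range_succ (fun i => fv T v i)]
  have hfN : fv T v N = 0 := by
    have ha : av T v N = 0 := by unfold av; rw [h N (le_refl N)]; simp
    have := fv_le_av hT v N; omega
  have hg : ∀ i, gv T v (i+1) = fv T v i := fun i => rfl
  have hg0 : gv T v 0 = 0 := rfl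
  rw [hfN, hg0]
  simp only [hg]

lemma wt_bk_v {T : SkewTab n} (hT : T.IsSSYT) {N : ℕ} (h : ∀ i, N ≤ i → T.row i = [])
    (v : ℕ) : (bk T v).wt v = T.wt (v+1) := by
  have h' : ∀ i, N+1 ≤ i → (bk T v).row i = [] :=
    fun i hi => bk_rows_empty hT h v i (by omega)
  have h'' : ∀ i, N+1 ≤ i → T.row i = [] := fun i hi => h i (by omega)
  rw [wt_eq_sum h' v, wt_eq_sum h'' (v+1)]
  have l1 : ∑ i ∈ Finset.range (N+1), ((bk T v).row i).count v
      = ∑ i ∈ Finset.range (N+1), bkA T v i :=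
    Finset.sum_congr rfl (fun i _ => bk_count_v v i)
  have l2 : ∑ i ∈ Finset.range (N+1), (T.row i).count (v+1)
      = ∑ i ∈ Finset.range (N+1), bv T v i :=
    Finset.sum_congr rfl (fun i _ => rfl)
  have key : ∑ i ∈ Finset.range (N+1), (bkA T v i + gv T v i)
      = ∑ i ∈ Finset.range (N+1), (fv T v i + bv T v i) := by
    refine Finset.sum_congr rfl (fun i _ => ?_)
    have := gv_le_bv hT v i
    unfold bkA
    omega
  rw [Finset.sum_add_distrib, Finset.sum_add_distrib, sum_gv hT h v] at key
  omega

lemma wt_bk_v1 {T : SkewTab n} (hT : T.IsSSYT) {N : ℕ} (h : ∀ i, N ≤ i → T.row i = [])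
    (v : ℕ) : (bk T v).wt (v+1) = T.wt v := by
  have h' : ∀ i, N+1 ≤ i → (bk T v).row i = [] :=
    fun i hi => bk_rows_empty hT h v i (by omega)
  have h'' : ∀ i, N+1 ≤ i → T.row i = [] := fun i hi => h i (by omega)
  rw [wt_eq_sum h' (v+1), wt_eq_sum h'' v]
  have l1 : ∑ i ∈ Finset.range (N+1), ((bk T v).row i).count (v+1)
      = ∑ i ∈ Finset.range (N+1), bkB T v i :=
    Finset.sum_congr rfl (fun i _ => bk_count_v1 v i)
  have l2 : ∑ i ∈ Finset.range (N+1), (T.row i).count v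
      = ∑ i ∈ Finset.range (N+1), av T v i :=
    Finset.sum_congr rfl (fun i _ => rfl)
  have key : ∑ i ∈ Finset.range (N+1), (bkB T v i + fv T v i)
      = ∑ i ∈ Finset.range (N+1), (gv T v i + av T v i) := by
    refine Finset.sum_congr rfl (fun i _ => ?_)
    have := fv_le_av hT v i
    unfold bkB
    omega
  rw [Finset.sum_add_distrib, Finset.sum_add_distrib, sum_gv hT h v] at key
  omega

lemma wt_bk_other {T : SkewTab n} (hT : T.IsSSYT) {N : ℕ} (h : ∀ i, N ≤ i → T.row i = [])
    {v x : ℕ} (hx : x ≠ v) (hx1 : x ≠ v+1) : (bk T v).wt x = T.wt x := by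
  have h' : ∀ i, N ≤ i → (bk T v).row i = [] := bk_rows_empty hT h v
  rw [wt_eq_sum h' x, wt_eq_sum h x]
  exact Finset.sum_congr rfl (fun i _ => bk_count_other hT i hx hx1)

end BKcore
namespace BKcore
open BKaux

variable {n : ℕ}

lemma bk_mem_Tabs {T : SkewTab n} {lam mu : ℕ → ℕ} (hTm : T ∈ Tabs n lam mu) {v : ℕ}
    (hv1 : 1 ≤ v) (hvn : v + 1 ≤ n) : bk T v ∈ Tabs n lam mu := by
  obtain ⟨hT, hin, hout⟩ := hTm
  exact ⟨bk_isSSYT hT hv1 hvn, by rw [bk_inner, hin], by rw [bk_outer hT, hout]⟩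

lemma bk_wt_swap {T : SkewTab n} {lam mu : ℕ → ℕ} (hTm : T ∈ Tabs n lam mu)
    (hl : IsPartition lam) (u : Fin n → ℕ) (hw : ∀ j : Fin n, T.wt ((j : ℕ) + 1) = u j)
    (k k' : Fin n) (hkk : (k' : ℕ) = (k : ℕ) + 1) :
    ∀ j : Fin n, (bk T ((k : ℕ) + 1)).wt ((j : ℕ) + 1) = (u ∘ Equiv.swap k k') j := by
  obtain ⟨N, hN⟩ := rows_empty hTm hl
  have hT := hTm.1
  intro j
  by_cases h1 : j = k
  · subst h1
    rw [Function.comp_apply, Equiv.swap_apply_left, wt_bk_v hT hN, ← hw k', hkk]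
  · by_cases h2 : j = k'
    · subst h2
      rw [Function.comp_apply, Equiv.swap_apply_right, hkk, wt_bk_v1 hT hN, hw k]
    · rw [Function.comp_apply, Equiv.swap_apply_of_ne_of_ne h1 h2, ← hw j]
      have hj1 : (j : ℕ) + 1 ≠ (k : ℕ) + 1 := fun h => h1 (Fin.ext (by omega))
      have hj2 : (j : ℕ) + 1 ≠ (k : ℕ) + 1 + 1 := fun h => h2 (Fin.ext (by omega))
      exact wt_bk_other hT hN hj1 hj2

lemma kostka_adj (lam mu : ℕ → ℕ) (hl : IsPartition lam) (w : Fin n → ℕ)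
    (k k' : Fin n) (hkk : (k' : ℕ) = (k : ℕ) + 1) :
    kostka n lam mu w = kostka n lam mu (w ∘ Equiv.swap k k') := by
  unfold kostka
  have hv1 : 1 ≤ (k : ℕ) + 1 := by omega
  have hvn : (k : ℕ) + 1 + 1 ≤ n := by have := k'.isLt; omega
  refine Nat.card_congr ⟨
    fun T => ⟨bk T.1 ((k : ℕ) + 1), bk_mem_Tabs T.2.1 hv1 hvn,
      bk_wt_swap T.2.1 hl w T.2.2 k k' hkk⟩,
    fun T => ⟨bk T.1 ((k : ℕ) + 1), bk_mem_Tabs T.2.1 hv1 hvn, ?_⟩,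
    fun T => Subtype.ext (bk_involution T.2.1.1 _),
    fun T => Subtype.ext (bk_involution T.2.1.1 _)⟩
  intro j
  have h := bk_wt_swap T.2.1 hl _ T.2.2 k k' hkk j
  rw [h]
  simp

lemma kostka_swap (lam mu : ℕ → ℕ) (hl : IsPartition lam) :
    ∀ m : ℕ, ∀ (w : Fin n → ℕ) (x y : Fin n), (y : ℕ) = (x : ℕ) + m →
      kostka n lam mu (w ∘ Equiv.swap x y) = kostka n lam mu w := by
  intro m
  induction m with
  | zero =>
    intro w x y hxy
    have hxyeq : x = y := Fin.ext (by omega)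
    subst hxyeq
    rw [Equiv.swap_self]
    congr 1
  | succ m ih =>
    intro w x y hxy
    cases m with
    | zero => exact (kostka_adj lam mu hl w x y hxy).symm
    | succ m' =>
      have hyn := y.isLt
      set z : Fin n := ⟨(x : ℕ) + m' + 1, by omega⟩ with hzdef
      have hxz : (z : ℕ) = (x : ℕ) + (m' + 1) := rfl
      have hzy : (y : ℕ) = (z : ℕ) + 1 := by rw [hxz]; omega
      have hxy' : x ≠ y := fun h => by rw [h] at hxy; omega
      have hxz' : x ≠ z := fun h => by
        have : (x : ℕ) = (z : ℕ) := congrArg Fin.val h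
        omega
      have hswap : Equiv.swap x y = Equiv.swap z y * Equiv.swap x z * Equiv.swap z y := by
        rw [Equiv.swap_mul_swap_mul_swap hxz' hxy', Equiv.swap_comm]
      have hcomp : w ∘ ⇑(Equiv.swap x y)
          = ((w ∘ ⇑(Equiv.swap z y)) ∘ ⇑(Equiv.swap x z)) ∘ ⇑(Equiv.swap z y) := by
        rw [hswap]
        rfl
      rw [hcomp, (kostka_adj lam mu hl ((w ∘ ⇑(Equiv.swap z y)) ∘ ⇑(Equiv.swap x z)) z y hzy).symm,
          ih (w ∘ ⇑(Equiv.swap z y)) x z hxz]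
      exact (kostka_adj lam mu hl w z y hzy).symm

lemma kostka_perm (lam mu : ℕ → ℕ) (hl : IsPartition lam) (w : Fin n → ℕ)
    (σ : Equiv.Perm (Fin n)) : kostka n lam mu (w ∘ σ) = kostka n lam mu w := by
  have main : ∀ σ : Equiv.Perm (Fin n), ∀ w : Fin n → ℕ,
      kostka n lam mu (w ∘ σ) = kostka n lam mu w := by
    intro σ
    refine Equiv.Perm.swap_induction_on σ (fun w => by simp) ?_
    intro f x y hxy ih w
    have hcomp : w ∘ ⇑(Equiv.swap x y * f) = (w ∘ ⇑(Equiv.swap x y)) ∘ ⇑f := by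
      rw [Equiv.Perm.coe_mul]; rfl
    rw [hcomp, ih (w ∘ ⇑(Equiv.swap x y))]
    have hvals : (x : ℕ) ≠ (y : ℕ) := fun h => hxy (Fin.ext h)
    rcases Nat.lt_or_ge (x : ℕ) (y : ℕ) with h | h
    · exact kostka_swap lam mu hl ((y : ℕ) - (x : ℕ)) w x y (by omega)
    · rw [Equiv.swap_comm]
      exact kostka_swap lam mu hl ((x : ℕ) - (y : ℕ)) w y x (by omega)
  exact main σ w

end BKcore
/-- Kostka coefficients are symmetric in the weight:
`K_{λ/μ,w} = K_{λ/μ,w̄}` where `w̄` is the weakly decreasing rearrangement of `w`. -/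
theorem kostka_rearrange (n : ℕ) (lam mu : ℕ → ℕ)
    (hl : IsPartition lam) (hm : IsPartition mu) (hml : ∀ i, mu i ≤ lam i)
    (w wbar : Fin n → ℕ) (σ : Equiv.Perm (Fin n)) (hperm : wbar = w ∘ σ)
    (hdec : ∀ i j : Fin n, i ≤ j → wbar j ≤ wbar i) :
    kostka n lam mu w = kostka n lam mu wbar := by
  rw [hperm]
  exact (BKcore.kostka_perm lam mu hl w σ).symm
end
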